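/- arXiv:2208.04252 — 3 statements merged into one kernel-verified Lean document; each statement's English description precedes it below -/
import Mathlib

section
/- Let m > 0 and let L ≥ 1 be a fixed integer. For N > L, let υ_N > 0 be the unique solution of G(m, m υ_N) = (L/N) · Γ(m), and define μ_N := N · G(m+1, m υ_N)/(m Γ(m)), σ̄_N² := N · G(m+2, m υ_N)/(L m² Γ(m)) − μ_N²/L², and σ_N² := L·(σ̄_N² + (υ_N − μ_N/L)²·(1 − L/N)), where G(s, x) := ∫_x^∞ t^{s−1} e^{−t} dt and Γ(m) = G(m, 0). Then σ_N²/(L² υ_N²) → 0 as N → ∞; consequently σ_N²/μ_N² → 0 as N → ∞. -/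
open MeasureTheory Set Filter

/-- The (real) upper incomplete gamma function `G(s, x) = ∫ₓ^∞ t^(s-1) e^(-t) dt`. -/
noncomputable def upperGamma (s x : ℝ) : ℝ :=
  ∫ t in Set.Ioi x, t ^ (s - 1) * Real.exp (-t)

lemma uG_integrable {s : ℝ} (hs : 0 < s) {x : ℝ} (hx : 0 ≤ x) :
    IntegrableOn (fun t : ℝ => t ^ (s - 1) * Real.exp (-t)) (Set.Ioi x) := by
  have h := (Real.GammaIntegral_convergent hs).mono_set (Set.Ioi_subset_Ioi hx)
  exact h.congr_fun (fun t _ => mul_comm _ _) measurableSet_Ioi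

lemma uG_rec {s x : ℝ} (hs : 0 < s) (hx : 0 < x) :
    upperGamma (s + 1) x = x ^ s * Real.exp (-x) + s * upperGamma s x := by
  have hderiv : ∀ t ∈ Set.Ioi x, HasDerivAt (fun t : ℝ => -(t ^ s * Real.exp (-t)))
      (t ^ s * Real.exp (-t) - s * (t ^ (s - 1) * Real.exp (-t))) t := by
    intro t ht
    have ht' : 0 < t := hx.trans ht
    have h1 : HasDerivAt (fun t : ℝ => t ^ s) (s * t ^ (s - 1)) t := by
      simpa using Real.hasDerivAt_rpow_const (x := t) (p := s) (Or.inl ht'.ne')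
    have h2 : HasDerivAt (fun t : ℝ => Real.exp (-t)) (-Real.exp (-t)) t := by
      have h := (Real.hasDerivAt_exp (-t)).comp t (hasDerivAt_neg t)
      rw [mul_neg_one] at h; exact h
    have := (h1.mul h2).neg
    refine this.congr_deriv ?_
    ring
  have hint1 : IntegrableOn (fun t : ℝ => t ^ s * Real.exp (-t)) (Set.Ioi x) := by
    have := uG_integrable (s := s + 1) (by linarith) hx.le
    simpa using this
  have hint2 := uG_integrable hs hx.le
  have f'int : IntegrableOn
      (fun t : ℝ => t ^ s * Real.exp (-t) - s * (t ^ (s - 1) * Real.exp (-t))) (Set.Ioi x) :=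
    hint1.sub (hint2.const_mul s)
  have htends : Tendsto (fun t : ℝ => -(t ^ s * Real.exp (-t))) atTop (nhds 0) := by
    have := (tendsto_rpow_mul_exp_neg_mul_atTop_nhds_zero s 1 one_pos).neg
    simpa using this
  have hcont : ContinuousWithinAt (fun t : ℝ => -(t ^ s * Real.exp (-t))) (Set.Ici x) x := by
    apply ContinuousAt.continuousWithinAt
    exact (((Real.continuousAt_rpow_const x s (Or.inl hx.ne')).mul
      ((Real.continuous_exp.comp continuous_neg).continuousAt))).neg
  have key := integral_Ioi_of_hasDerivAt_of_tendsto hcont hderiv f'int htends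
  rw [integral_sub hint1 (hint2.const_mul s), integral_const_mul] at key
  have e1 : upperGamma (s + 1) x = ∫ t in Set.Ioi x, t ^ s * Real.exp (-t) := by
    unfold upperGamma; norm_num
  rw [e1]
  unfold upperGamma
  linarith [key]

lemma uG_mul_le {s x : ℝ} (hs : 0 < s) (hx : 0 < x) :
    x * upperGamma s x ≤ upperGamma (s + 1) x := by
  unfold upperGamma
  rw [← integral_const_mul]
  apply setIntegral_mono_on ((uG_integrable hs hx.le).const_mul x)
    (uG_integrable (by linarith : (0:ℝ) < s + 1) hx.le) measurableSet_Ioi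
  intro t ht
  have ht' : 0 < t := hx.trans ht
  have e : t ^ (s + 1 - 1) = t * t ^ (s - 1) := by
    rw [show s + 1 - 1 = (s - 1) + 1 by ring, Real.rpow_add_one ht'.ne']; ring
  rw [e]
  have h1 : (0:ℝ) ≤ t ^ (s - 1) := Real.rpow_nonneg ht'.le _
  have h2 := Real.exp_pos (-t)
  nlinarith [mul_le_mul_of_nonneg_right (le_of_lt (Set.mem_Ioi.mp ht)) (mul_nonneg h1 h2.le)]

lemma uG_anti {s a b : ℝ} (hs : 0 < s) (ha : 0 ≤ a) (hab : a ≤ b) :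
    upperGamma s b ≤ upperGamma s a := by
  apply setIntegral_mono_set (uG_integrable hs ha)
  · filter_upwards [ae_restrict_mem measurableSet_Ioi] with t ht
    have ht' : 0 < t := lt_of_le_of_lt ha ht
    positivity
  · exact HasSubset.Subset.eventuallyLE (Set.Ioi_subset_Ioi hab)

lemma integral_exp_neg_mul_Ioi' {b x : ℝ} (hb : 0 < b) :
    ∫ t in Set.Ioi x, Real.exp (-(b * t)) = Real.exp (-(b * x)) / b := by
  have hderiv : ∀ t ∈ Set.Ioi x, HasDerivAt (fun t : ℝ => -(Real.exp (-(b * t)) / b))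
      (Real.exp (-(b * t))) t := by
    intro t _
    have h1 : HasDerivAt (fun t : ℝ => -(b * t)) (-b) t := by
      have h := ((hasDerivAt_id t).const_mul b).neg
      rw [mul_one] at h; exact h
    have h2 := (Real.hasDerivAt_exp (-(b * t))).comp t h1
    have h3 := (h2.div_const b).neg
    refine h3.congr_deriv ?_
    rw [mul_neg, neg_div, neg_neg, mul_div_assoc, div_self hb.ne', mul_one]
  have f'int : IntegrableOn (fun t : ℝ => Real.exp (-(b * t))) (Set.Ioi x) := by
    have := exp_neg_integrableOn_Ioi x hb
    simpa [neg_mul] using this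
  have htends : Tendsto (fun t : ℝ => -(Real.exp (-(b * t)) / b)) atTop (nhds 0) := by
    have h0 : Tendsto (fun t : ℝ => b * t) atTop atTop := Tendsto.const_mul_atTop hb tendsto_id
    have h1 : Tendsto (fun t : ℝ => -(b * t)) atTop atBot := tendsto_neg_atTop_atBot.comp h0
    have := (Real.tendsto_exp_atBot.comp h1).div_const b |>.neg
    simpa using this
  have hcont : ContinuousWithinAt (fun t : ℝ => -(Real.exp (-(b * t)) / b)) (Set.Ici x) x :=
    (((Real.continuous_exp.comp (continuous_const.mul continuous_id).neg).div_const b).neg).continuousWithinAt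
  have key := integral_Ioi_of_hasDerivAt_of_tendsto hcont hderiv f'int htends
  rw [key]
  field_simp
  ring

lemma uG_lower {s x : ℝ} (hs : 0 < s) (hx : 1 ≤ x) :
    x ^ s * Real.exp (-x) / (x + 1) ≤ upperGamma s x := by
  have hx0 : 0 < x := lt_of_lt_of_le one_pos hx
  have hes : x ^ s = x ^ (s - 1) * x := by
    rw [← Real.rpow_add_one hx0.ne']; ring_nf
  have hp : 0 < x ^ (s - 1) := Real.rpow_pos_of_pos hx0 _
  rcases le_or_gt 1 s with h1s | hs1
  · have key : x ^ (s - 1) * Real.exp (-x) ≤ upperGamma s x := by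
      unfold upperGamma
      have e : x ^ (s - 1) * Real.exp (-x) = ∫ t in Set.Ioi x, x ^ (s - 1) * Real.exp (-t) := by
        rw [integral_const_mul, integral_exp_neg_Ioi]
      rw [e]
      refine setIntegral_mono_on (Integrable.const_mul ?_ _) (uG_integrable hs hx0.le)
        measurableSet_Ioi ?_
      · simpa [neg_mul, IntegrableOn] using exp_neg_integrableOn_Ioi x one_pos
      · intro t ht
        have ht' : 0 < t := hx0.trans ht
        have h2 : x ^ (s - 1) ≤ t ^ (s - 1) :=
          Real.rpow_le_rpow hx0.le (le_of_lt ht) (by linarith)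
        nlinarith [Real.exp_pos (-t)]
    have h3 : x ^ s * Real.exp (-x) / (x + 1) ≤ x ^ (s - 1) * Real.exp (-x) := by
      rw [hes, div_le_iff₀ (by linarith)]
      nlinarith [Real.exp_pos (-x)]
    linarith
  · set b := 1 + (1 - s) / x with hbdef
    have hbpos : 0 < b := by
      have h : 0 ≤ (1 - s) / x := div_nonneg (by linarith) hx0.le
      show (0:ℝ) < 1 + (1 - s) / x
      linarith
    have key : ∫ t in Set.Ioi x, x ^ (s - 1) * Real.exp (1 - s) * Real.exp (-(b * t))
        ≤ upperGamma s x := by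
      unfold upperGamma
      refine setIntegral_mono_on (Integrable.const_mul ?_ _) (uG_integrable hs hx0.le)
        measurableSet_Ioi ?_
      · simpa [neg_mul, IntegrableOn] using exp_neg_integrableOn_Ioi x hbpos
      · intro t ht
        have ht' : 0 < t := hx0.trans ht
        have hlog : Real.log (t / x) ≤ t / x - 1 := Real.log_le_sub_one_of_pos (by positivity)
        have h2 : (s - 1) * (t / x - 1) ≤ (s - 1) * Real.log (t / x) :=
          mul_le_mul_of_nonpos_left hlog (by linarith)
        have e1 : Real.exp (1 - s) * Real.exp (-(b * t))
            = Real.exp ((s - 1) * (t / x - 1)) * Real.exp (-t) := by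
          rw [← Real.exp_add, ← Real.exp_add]
          congr 1
          rw [hbdef]
          field_simp
          ring
        have e2 : (t / x) ^ (s - 1) = Real.exp ((s - 1) * Real.log (t / x)) := by
          rw [Real.rpow_def_of_pos (by positivity), mul_comm]
        have e3 : t ^ (s - 1) = x ^ (s - 1) * (t / x) ^ (s - 1) := by
          rw [Real.div_rpow ht'.le hx0.le]
          field_simp
        have h4 : Real.exp ((s - 1) * (t / x - 1)) ≤ (t / x) ^ (s - 1) := by
          rw [e2]; exact Real.exp_le_exp.mpr h2
        calc x ^ (s - 1) * Real.exp (1 - s) * Real.exp (-(b * t))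
            = x ^ (s - 1) * (Real.exp ((s - 1) * (t / x - 1)) * Real.exp (-t)) := by
              rw [mul_assoc, e1]
          _ ≤ x ^ (s - 1) * ((t / x) ^ (s - 1) * Real.exp (-t)) := by
              have := Real.exp_pos (-t)
              nlinarith [mul_le_mul_of_nonneg_right h4 this.le]
          _ = t ^ (s - 1) * Real.exp (-t) := by rw [e3]; ring
    have e4 : ∫ t in Set.Ioi x, x ^ (s - 1) * Real.exp (1 - s) * Real.exp (-(b * t))
        = x ^ (s - 1) * Real.exp (-x) / b := by
      rw [integral_const_mul, integral_exp_neg_mul_Ioi' hbpos]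
      have ebx : b * x = x + 1 - s := by
        rw [hbdef]; field_simp; ring
      have e5 : Real.exp (1 - s) * Real.exp (-(x + 1 - s)) = Real.exp (-x) := by
        rw [← Real.exp_add]; congr 1; ring
      rw [ebx]
      calc x ^ (s - 1) * Real.exp (1 - s) * (Real.exp (-(x + 1 - s)) / b)
          = x ^ (s - 1) * (Real.exp (1 - s) * Real.exp (-(x + 1 - s))) / b := by ring
        _ = x ^ (s - 1) * Real.exp (-x) / b := by rw [e5]
    have h5 : x ^ s * Real.exp (-x) / (x + 1) ≤ x ^ (s - 1) * Real.exp (-x) / b := by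
      rw [hes, div_le_div_iff₀ (by linarith) hbpos]
      have ebx : b * x = x + 1 - s := by rw [hbdef]; field_simp; ring
      have := Real.exp_pos (-x)
      nlinarith [mul_pos hp this]
    linarith [key, e4.symm.le.trans key]

lemma aux_abs (m x g1 E t : ℝ) (hm : 0 < m) (hx1 : 1 ≤ x) (hg1 : 0 < g1) (hE0 : 0 < E)
    (hE1 : (x - m) * g1 ≤ E) (hE2 : E ≤ (x + 1) * g1) (ht0 : 0 ≤ t) (ht1 : t ≤ 1) :
    |E * g1 * (x + 1 - m) + m * g1^2 - E^2 + ((x - m) * g1 - E)^2 * t|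
      ≤ 3 * (m + 2)^2 * (x * g1^2) := by
  have hq : ((x - m) * g1 - E)^2 ≤ (m + 1)^2 * g1^2 := by
    nlinarith [mul_nonneg (sub_nonneg.mpr hE1) (sub_nonneg.mpr hE2),
      sq_nonneg ((x + 1) * g1 - E), hg1, hm]
  have hqt2 : ((x - m) * g1 - E)^2 * t ≤ (m + 1)^2 * g1^2 := by
    nlinarith [hq, mul_le_mul_of_nonneg_left ht1 (sq_nonneg ((x - m) * g1 - E))]
  have hqt0 : 0 ≤ ((x - m) * g1 - E)^2 * t := mul_nonneg (sq_nonneg _) ht0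
  have h5 : E * (g1 * (x + 1 - m) - E) ≤ E * g1 :=
    mul_le_mul_of_nonneg_left (by nlinarith [hE1]) hE0.le
  have h6 : E * g1 ≤ (x + 1) * g1 * g1 := mul_le_mul_of_nonneg_right hE2 hg1.le
  have h8 : -(m * g1) ≤ g1 * (x + 1 - m) - E := by nlinarith [hE2]
  have h9 := mul_le_mul_of_nonneg_left h8 hE0.le
  have h10 : E * (m * g1) ≤ (x + 1) * g1 * (m * g1) :=
    mul_le_mul_of_nonneg_right hE2 (mul_nonneg hm.le hg1.le)
  rw [abs_le]
  constructor
  · nlinarith [h9, h10, hqt0, sq_nonneg g1,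
      mul_nonneg (mul_nonneg (by linarith : (0:ℝ) ≤ x - 1) hm.le) (sq_nonneg g1),
      mul_nonneg (by linarith : (0:ℝ) ≤ x) (sq_nonneg g1),
      mul_nonneg (mul_nonneg hm.le hm.le) (sq_nonneg g1),
      mul_nonneg (sub_nonneg.mpr hx1) (sq_nonneg g1)]
  · nlinarith [h5, h6, hqt2, sq_nonneg g1,
      mul_nonneg (mul_nonneg (by linarith : (0:ℝ) ≤ x - 1) hm.le) (sq_nonneg g1),
      mul_nonneg (mul_nonneg hm.le hm.le) (sq_nonneg g1),
      mul_nonneg (sub_nonneg.mpr hx1) (sq_nonneg g1)]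

lemma aux_coef (C x g1 L : ℝ) (hC0 : 0 ≤ C) (hL1 : 1 ≤ L) :
    C * (x * g1^2) * x ≤ C * (L * x^2 * g1^2) := by
  have h : 0 ≤ C * x^2 * g1^2 := mul_nonneg (mul_nonneg hC0 (sq_nonneg x)) (sq_nonneg g1)
  nlinarith [mul_le_mul_of_nonneg_left hL1 h]


set_option maxHeartbeats 1000000 in
theorem stmt15 (m : ℝ) (hm : 0 < m) (L : ℕ) (hL : 1 ≤ L)
    (υ μ σbarSq σSq : ℕ → ℝ)
    (hυ : ∀ N : ℕ, L < N →
      0 < υ N ∧ upperGamma m (m * υ N) = ((L : ℝ) / N) * upperGamma m 0)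
    (hμ : ∀ N : ℕ, L < N →
      μ N = N * upperGamma (m + 1) (m * υ N) / (m * upperGamma m 0))
    (hσbar : ∀ N : ℕ, L < N →
      σbarSq N = N * upperGamma (m + 2) (m * υ N) / ((L : ℝ) * m ^ 2 * upperGamma m 0)
        - μ N ^ 2 / (L : ℝ) ^ 2)
    (hσ : ∀ N : ℕ, L < N →
      σSq N = (L : ℝ) * (σbarSq N + (υ N - μ N / (L : ℝ)) ^ 2 * (1 - (L : ℝ) / N))) :
    Tendsto (fun N : ℕ => σSq N / ((L : ℝ) ^ 2 * υ N ^ 2)) atTop (nhds 0) ∧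
      Tendsto (fun N : ℕ => σSq N / μ N ^ 2) atTop (nhds 0) := by
  have hL0 : (0:ℝ) < L := by exact_mod_cast hL
  have hL1 : (1:ℝ) ≤ L := by exact_mod_cast hL
  set C : ℝ := 3 * (m + 2) ^ 2 with hCdef
  have hC0 : 0 < C := by positivity
  -- m * υ N → ∞
  have hx_top : Tendsto (fun N : ℕ => m * υ N) atTop atTop := by
    rw [tendsto_atTop]
    intro M
    have hM1 : (1:ℝ) ≤ max M 1 := le_max_right _ _
    have hMp : (0:ℝ) < max M 1 := lt_of_lt_of_le one_pos hM1
    have hη : 0 < upperGamma m (max M 1) := by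
      have h1 := uG_lower hm hM1
      have h2 : 0 < (max M 1) ^ m * Real.exp (-(max M 1)) / (max M 1 + 1) :=
        div_pos (mul_pos (Real.rpow_pos_of_pos hMp m) (Real.exp_pos _)) (by linarith)
      linarith
    have h0 : Tendsto (fun N : ℕ => (L:ℝ) * upperGamma m 0 / N) atTop (nhds 0) :=
      Tendsto.div_atTop tendsto_const_nhds tendsto_natCast_atTop_atTop
    filter_upwards [h0.eventually_lt_const hη, eventually_gt_atTop L] with N h1 h2
    obtain ⟨hυpos, hυeq⟩ := hυ N h2
    by_contra hcon
    push_neg at hcon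
    have h3 : upperGamma m (max M 1) ≤ upperGamma m (m * υ N) :=
      uG_anti hm (mul_pos hm hυpos).le (le_trans hcon.le (le_max_left _ _))
    rw [hυeq] at h3
    have h4 : (L:ℝ)/N * upperGamma m 0 = (L:ℝ) * upperGamma m 0 / N := by ring
    rw [h4] at h3
    linarith
  -- the eventual bound
  have main : ∀ᶠ N : ℕ in atTop,
      |σSq N / ((L:ℝ)^2 * υ N ^ 2)| ≤ C / (m * υ N) ∧
      |σSq N / μ N ^ 2| ≤ C / (m * υ N) := by
    filter_upwards [eventually_gt_atTop L, hx_top.eventually_ge_atTop (max (m + 2) 1)]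
      with N hN hxge
    obtain ⟨hυpos, hυeq⟩ := hυ N hN
    set x : ℝ := m * υ N with hxdef
    have hx1 : (1:ℝ) ≤ x := le_trans (le_max_right _ _) hxge
    have hxm : m + 2 ≤ x := le_trans (le_max_left _ _) hxge
    have hx0 : (0:ℝ) < x := lt_of_lt_of_le one_pos hx1
    set g1 : ℝ := upperGamma m x with hg1def
    set g2 : ℝ := upperGamma (m + 1) x with hg2def
    set g3 : ℝ := upperGamma (m + 2) x with hg3def
    set E : ℝ := x ^ m * Real.exp (-x) with hEdef
    have hE0 : 0 < E := by
      rw [hEdef]; exact mul_pos (Real.rpow_pos_of_pos hx0 m) (Real.exp_pos _)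
    have hlow : E / (x + 1) ≤ g1 := by
      rw [hEdef, hg1def]; exact uG_lower hm hx1
    have hrec1 : g2 = E + m * g1 := by
      rw [hg2def, hEdef, hg1def]; exact uG_rec hm hx0
    have hrec2 : g3 = x * E + (m + 1) * g2 := by
      rw [hg3def, hg2def, hEdef]
      have h := uG_rec (by linarith : (0:ℝ) < m + 1) hx0
      rw [show m + 1 + 1 = m + 2 by ring] at h
      rw [h, Real.rpow_add_one hx0.ne']
      ring
    have hmul1 : x * g1 ≤ g2 := by
      rw [hg1def, hg2def]; exact uG_mul_le hm hx0
    clear_value E g3 g2 g1 x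
    have hg1 : 0 < g1 := lt_of_lt_of_le (div_pos hE0 (by linarith)) hlow
    have hE2 : E ≤ (x + 1) * g1 := by
      rw [div_le_iff₀ (by linarith : (0:ℝ) < x + 1)] at hlow
      nlinarith [hlow]
    have hE1 : (x - m) * g1 ≤ E := by nlinarith [hmul1, hrec1]
    have hN0 : (0:ℝ) < (N:ℝ) := by
      have : 0 < N := lt_of_le_of_lt (Nat.zero_le L) hN
      exact_mod_cast this
    have hLN : (L:ℝ) ≤ (N:ℝ) := by exact_mod_cast hN.le
    have ht0 : 0 ≤ 1 - (L:ℝ)/N := by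
      rw [sub_nonneg, div_le_one hN0]; exact hLN
    have ht1 : 1 - (L:ℝ)/N ≤ 1 := by
      have : 0 ≤ (L:ℝ)/N := div_nonneg hL0.le hN0.le
      linarith
    have hΓeq : upperGamma m 0 = (N:ℝ) * g1 / L := by
      rw [hυeq]; field_simp
    have hμval : μ N = (L:ℝ) * g2 / (m * g1) := by
      rw [hμ N hN, ← hxdef, ← hg2def, hΓeq]
      field_simp
    have hυx : υ N = x / m := by
      rw [hxdef]; field_simp
    -- the value identity
    have hval : σSq N / ((L:ℝ)^2 * υ N ^ 2) =
        (E * g1 * (x + 1 - m) + m * g1^2 - E^2 + ((x - m) * g1 - E)^2 * (1 - (L:ℝ)/N))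
          / ((L:ℝ) * x^2 * g1^2) := by
      rw [hσ N hN, hσbar N hN, hμval, ← hxdef, ← hg3def, hrec2, hrec1, hΓeq, hυx]
      field_simp
      ring
    -- numerator bound
    have hA : |E * g1 * (x + 1 - m) + m * g1^2 - E^2 + ((x - m) * g1 - E)^2 * (1 - (L:ℝ)/N)|
        ≤ C * (x * g1^2) := by
      rw [hCdef]
      exact aux_abs m x g1 E _ hm hx1 hg1 hE0 hE1 hE2 ht0 ht1
    have hden : (0:ℝ) < (L:ℝ) * x^2 * g1^2 :=
      mul_pos (mul_pos hL0 (pow_pos hx0 2)) (pow_pos hg1 2)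
    have habs : |σSq N / ((L:ℝ)^2 * υ N ^ 2)| ≤ C / x := by
      rw [hval, abs_div, abs_of_pos hden, div_le_div_iff₀ hden hx0]
      calc |E * g1 * (x + 1 - m) + m * g1^2 - E^2 + ((x - m) * g1 - E)^2 * (1 - (L:ℝ)/N)| * x
          ≤ (C * (x * g1^2)) * x := mul_le_mul_of_nonneg_right hA hx0.le
        _ ≤ C * ((L:ℝ) * x^2 * g1^2) := aux_coef C x g1 L hC0.le hL1
    refine ⟨habs, ?_⟩
    -- second: μ² ≥ L²υ²
    have hx_div : x / m ≤ g2 / (m * g1) := by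
      rw [div_le_div_iff₀ hm (mul_pos hm hg1)]
      nlinarith [mul_le_mul_of_nonneg_left hmul1 hm.le]
    have hμge : (L:ℝ) * υ N ≤ μ N := by
      rw [hμval, hυx, mul_div_assoc]
      exact mul_le_mul_of_nonneg_left hx_div hL0.le
    have hμpos : 0 < μ N := lt_of_lt_of_le (mul_pos hL0 hυpos) hμge
    have hμsq : (L:ℝ)^2 * υ N ^ 2 ≤ μ N ^ 2 := by
      have h := pow_le_pow_left₀ (mul_pos hL0 hυpos).le hμge 2
      rwa [mul_pow] at h
    have hden2 : (0:ℝ) < (L:ℝ)^2 * υ N ^ 2 := mul_pos (pow_pos hL0 2) (pow_pos hυpos 2)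
    calc |σSq N / μ N ^ 2| = |σSq N| / μ N ^ 2 := by
          rw [abs_div, abs_of_pos (pow_pos hμpos 2)]
      _ ≤ |σSq N| / ((L:ℝ)^2 * υ N ^ 2) := by gcongr
      _ = |σSq N / ((L:ℝ)^2 * υ N ^ 2)| := by
          rw [abs_div, abs_of_pos hden2]
      _ ≤ C / x := habs
  have hg : Tendsto (fun N : ℕ => C / (m * υ N)) atTop (nhds 0) :=
    Tendsto.div_atTop tendsto_const_nhds hx_top
  constructor
  · refine squeeze_zero_norm' ?_ hg
    filter_upwards [main] with N h
    rw [Real.norm_eq_abs]; exact h.1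
  · refine squeeze_zero_norm' ?_ hg
    filter_upwards [main] with N h
    rw [Real.norm_eq_abs]; exact h.2
end

section
/- Let c > 0. For each N, let γ_N be the Gaussian probability measure on ℝ with mean μ_N and variance σ_N² ≥ 0. If μ_N → ∞ and σ_N²/μ_N² → 0 as N → ∞, then (∫ log₂(1 + c|x|) dγ_N(x)) / log₂(1 + c μ_N) → 1 as N → ∞. -/
open MeasureTheory ProbabilityTheory Filter

open Set Real
open scoped NNReal ENNReal

-- step 1: Ioi integral of x exp(-b x^2)
lemma myIoi {b : ℝ} (hb : 0 < b) :
    ∫ r in Set.Ioi (0:ℝ), r * Real.exp (-b * r ^ 2) = (2 * b)⁻¹ := by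
  have A : ∀ x : ℝ, HasDerivAt (fun y : ℝ => -(2 * b)⁻¹ * Real.exp (-b * y ^ 2))
      (x * Real.exp (-b * x ^ 2)) x := by
    intro x
    convert ((hasDerivAt_pow 2 x).const_mul (-b)).exp.const_mul (-(2 * b)⁻¹) using 1
    · rfl
    · rfl
    field_simp
    ring
  have B : Tendsto (fun y : ℝ => -(2 * b)⁻¹ * Real.exp (-b * y ^ 2)) atTop
      (nhds (-(2 * b)⁻¹ * 0)) := by
    refine Tendsto.const_mul _ ?_
    exact Real.tendsto_exp_atBot.comp
      ((tendsto_pow_atTop two_ne_zero).const_mul_atTop_of_neg (neg_lt_zero.2 hb))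
  have := integral_Ioi_of_hasDerivAt_of_tendsto' (a := (0:ℝ)) (fun x _ => A x)
    (integrable_mul_exp_neg_mul_sq hb).integrableOn B
  rw [this]
  norm_num

lemma myAbs {b : ℝ} (hb : 0 < b) :
    ∫ x : ℝ, |x| * Real.exp (-b * x ^ 2) = b⁻¹ := by
  have : ∀ x : ℝ, |x| * Real.exp (-b * x ^ 2) = (fun t => t * Real.exp (-b * t ^ 2)) |x| := by
    intro x; simp [sq_abs]
  calc ∫ x : ℝ, |x| * Real.exp (-b * x ^ 2)
      = ∫ x : ℝ, (fun t => t * Real.exp (-b * t ^ 2)) |x| := by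
        exact integral_congr_ae (Filter.Eventually.of_forall this)
    _ = 2 * ∫ t in Set.Ioi (0:ℝ), t * Real.exp (-b * t ^ 2) :=
        integral_comp_abs (f := fun t => t * Real.exp (-b * t ^ 2))
    _ = b⁻¹ := by rw [myIoi hb, mul_inv]; ring

lemma pdf_eq (m : ℝ) (v : ℝ≥0) (x : ℝ) :
    gaussianPDFReal m v x
      = (Real.sqrt (2 * π * (v : ℝ)))⁻¹ * Real.exp (-(2 * (v : ℝ))⁻¹ * (x - m) ^ 2) := by
  rw [gaussianPDFReal]
  have h : -(x - m) ^ 2 / (2 * (v : ℝ)) = -(2 * (v : ℝ))⁻¹ * (x - m) ^ 2 := by ring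
  rw [h]

lemma gauss_integral_eq (m : ℝ) {v : ℝ≥0} (hv : v ≠ 0) (g : ℝ → ℝ) :
    ∫ x, g x ∂(gaussianReal m v) = ∫ x, gaussianPDFReal m v x * g x := by
  rw [gaussianReal_of_var_ne_zero _ hv]
  have hm : Measurable fun x => Real.toNNReal (gaussianPDFReal m v x) :=
    (measurable_gaussianPDFReal m v).real_toNNReal
  have hd : gaussianPDF m v = fun x => ((Real.toNNReal (gaussianPDFReal m v x) : ℝ≥0) : ℝ≥0∞) :=
    rfl
  rw [hd, integral_withDensity_eq_integral_smul hm]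
  refine integral_congr_ae (Filter.Eventually.of_forall fun x => ?_)
  simp [NNReal.smul_def, Real.coe_toNNReal _ (gaussianPDFReal_nonneg m v x)]

lemma gauss_integrable (m : ℝ) {v : ℝ≥0} (hv : v ≠ 0) {g : ℝ → ℝ}
    (h : Integrable (fun x => gaussianPDFReal m v x * g x)) :
    Integrable g (gaussianReal m v) := by
  rw [gaussianReal_of_var_ne_zero _ hv]
  have hm : Measurable fun x => Real.toNNReal (gaussianPDFReal m v x) :=
    (measurable_gaussianPDFReal m v).real_toNNReal
  have hd : gaussianPDF m v = fun x => ((Real.toNNReal (gaussianPDFReal m v x) : ℝ≥0) : ℝ≥0∞) :=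
    rfl
  rw [hd, integrable_withDensity_iff_integrable_smul hm]
  refine h.congr (Filter.Eventually.of_forall fun x => ?_)
  simp [NNReal.smul_def, Real.coe_toNNReal _ (gaussianPDFReal_nonneg m v x)]

lemma integrable_pdf_abs (m : ℝ) {v : ℝ≥0} (hv : v ≠ 0) :
    Integrable (fun x => gaussianPDFReal m v x * |x - m|) := by
  have hV : (0:ℝ) < v := by
    have := v.coe_nonneg
    rcases this.lt_or_eq with h | h
    · exact h
    · exact absurd (by exact_mod_cast h.symm) hv
  have ha : (0:ℝ) < (2 * (v : ℝ))⁻¹ := by positivity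
  have base : Integrable (fun y : ℝ => |y| * Real.exp (-(2 * (v : ℝ))⁻¹ * y ^ 2)) := by
    refine ((integrable_mul_exp_neg_mul_sq ha).abs).congr
      (Filter.Eventually.of_forall fun y => ?_)
    simp only
    rw [abs_mul, abs_of_pos (Real.exp_pos _)]
  refine ((base.comp_sub_right m).const_mul ((Real.sqrt (2 * π * (v : ℝ)))⁻¹)).congr
    (Filter.Eventually.of_forall fun x => ?_)
  simp only
  rw [pdf_eq]
  ring

lemma gauss_abs_moment_le (m : ℝ) (v : ℝ≥0) :
    ∫ x, |x - m| ∂(gaussianReal m v) ≤ Real.sqrt v := by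
  by_cases hv : v = 0
  · subst hv
    rw [gaussianReal_zero_var, integral_dirac]
    simp
  · have hV : (0:ℝ) < v := by
      have := v.coe_nonneg
      rcases this.lt_or_eq with h | h
      · exact h
      · exact absurd (by exact_mod_cast h.symm) hv
    have ha : (0:ℝ) < (2 * (v : ℝ))⁻¹ := by positivity
    rw [gauss_integral_eq m hv]
    have step : ∫ x, gaussianPDFReal m v x * |x - m|
        = (Real.sqrt (2 * π * (v : ℝ)))⁻¹ * (2 * (v : ℝ)) := by
      calc ∫ x, gaussianPDFReal m v x * |x - m|
          = ∫ x, (fun y => gaussianPDFReal 0 v y * |y|) (x - m) := by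
            refine integral_congr_ae (Filter.Eventually.of_forall fun x => ?_)
            simp only [pdf_eq, sub_zero]
        _ = ∫ y, gaussianPDFReal 0 v y * |y| := by
            simpa using integral_sub_right_eq_self (fun y => gaussianPDFReal 0 v y * |y|) m
        _ = ∫ y, (Real.sqrt (2 * π * (v : ℝ)))⁻¹ * (|y| * Real.exp (-(2 * (v:ℝ))⁻¹ * y ^ 2)) := by
            refine integral_congr_ae (Filter.Eventually.of_forall fun y => ?_)
            simp only
            rw [pdf_eq, sub_zero]
            ring
        _ = (Real.sqrt (2 * π * (v : ℝ)))⁻¹ * (2 * (v : ℝ)) := by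
            rw [integral_const_mul, myAbs ha, inv_inv]
    rw [step]
    have hsq : 0 < Real.sqrt (2 * π * (v : ℝ)) := Real.sqrt_pos.mpr (by positivity)
    rw [inv_mul_le_iff₀ hsq]
    have h4 : 2 * Real.sqrt (v : ℝ) ≤ Real.sqrt (2 * π * (v : ℝ)) := by
      have : (2:ℝ) * Real.sqrt (v:ℝ) = Real.sqrt (4 * (v:ℝ)) := by
        rw [show (4:ℝ) * (v:ℝ) = 2 ^ 2 * (v:ℝ) by ring, Real.sqrt_mul (by positivity) (v:ℝ),
          Real.sqrt_sq (by norm_num : (0:ℝ) ≤ 2)]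
      rw [this]
      exact Real.sqrt_le_sqrt (by nlinarith [Real.pi_gt_three, hV.le])
    have h5 : Real.sqrt (v:ℝ) * Real.sqrt (v:ℝ) = (v:ℝ) := Real.mul_self_sqrt v.coe_nonneg
    have h6 : 0 ≤ Real.sqrt (v:ℝ) := Real.sqrt_nonneg _
    nlinarith

lemma gauss_integrable_abs (m : ℝ) (v : ℝ≥0) :
    Integrable (fun x => |x - m|) (gaussianReal m v) := by
  by_cases hv : v = 0
  · subst hv
    rw [gaussianReal_zero_var]
    exact (integrable_const (|m - m|)).congr (ae_eq_dirac (fun x => |x - m|)).symm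
  · exact gauss_integrable m hv (integrable_pdf_abs m hv)

lemma f_cont (c : ℝ) (hc : 0 < c) : Continuous fun x : ℝ => Real.logb 2 (1 + c * |x|) := by
  have h : Continuous fun x : ℝ => Real.log (1 + c * |x|) :=
    ((continuous_const.add (continuous_const.mul continuous_abs)).log
      (fun x => (by positivity : (0:ℝ) < 1 + c * |x|).ne'))
  simpa [Real.logb] using h.div_const (Real.log 2)

lemma gauss_integrable_f (c : ℝ) (hc : 0 < c) (m : ℝ) (v : ℝ≥0) :
    Integrable (fun x => Real.logb 2 (1 + c * |x|)) (gaussianReal m v) := by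
  have hl2 : (0:ℝ) < Real.log 2 := Real.log_pos one_lt_two
  refine Integrable.mono'
    (g := fun x => c / Real.log 2 * (|x - m| + |m|))
    (((gauss_integrable_abs m v).add (integrable_const (|m|))).const_mul _)
    ((f_cont c hc).aestronglyMeasurable) ?_
  refine Filter.Eventually.of_forall fun x => ?_
  have h1 : (0:ℝ) < 1 + c * |x| := by positivity
  have h2 : Real.log (1 + c * |x|) ≤ c * |x| := by
    have := Real.log_le_sub_one_of_pos h1
    linarith
  have h3 : |x| ≤ |x - m| + |m| := by
    calc |x| = |x - m + m| := by ring_nf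
      _ ≤ |x - m| + |m| := abs_add_le _ _
  rw [Real.norm_eq_abs,
    abs_of_nonneg (Real.logb_nonneg one_lt_two (by nlinarith [abs_nonneg x]))]
  rw [Real.logb]
  calc Real.log (1 + c * |x|) / Real.log 2 ≤ (c * (|x - m| + |m|)) / Real.log 2 := by
        gcongr
        nlinarith [abs_nonneg (x - m), abs_nonneg m]
    _ = c / Real.log 2 * (|x - m| + |m|) := by ring

lemma gauss_upper (c : ℝ) (hc : 0 < c) (m : ℝ) (hm : 0 ≤ m) (v : ℝ≥0) :
    ∫ x, Real.logb 2 (1 + c * |x|) ∂(gaussianReal m v)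
      ≤ Real.logb 2 (1 + c * m) + c / ((1 + c * m) * Real.log 2) * Real.sqrt v := by
  set P := gaussianReal m v
  have h1cm : (0:ℝ) < 1 + c * m := by positivity
  have hl2 : (0:ℝ) < Real.log 2 := Real.log_pos one_lt_two
  have pointwise : ∀ x : ℝ, Real.logb 2 (1 + c * |x|)
      ≤ Real.logb 2 (1 + c * m) + c / ((1 + c * m) * Real.log 2) * |x - m| := by
    intro x
    have h0 : (0:ℝ) < 1 + c * |x| := by positivity
    have hlog : Real.log (1 + c * |x|) - Real.log (1 + c * m) ≤ c * (|x| - m) / (1 + c * m) := by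
      have hd := Real.log_le_sub_one_of_pos
        (show (0:ℝ) < (1 + c * |x|) / (1 + c * m) by positivity)
      rw [Real.log_div (ne_of_gt h0) (ne_of_gt h1cm)] at hd
      have he : (1 + c * |x|) / (1 + c * m) - 1 = c * (|x| - m) / (1 + c * m) := by
        field_simp
        ring
      linarith
    have habs : |x| - m ≤ |x - m| := by
      have h3 : |x| ≤ |x - m| + |m| := by
        calc |x| = |x - m + m| := by ring_nf
          _ ≤ |x - m| + |m| := abs_add_le _ _
      rw [abs_of_nonneg hm] at h3
      linarith
    have h2 : c * (|x| - m) / (1 + c * m) ≤ c * |x - m| / (1 + c * m) := by gcongr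
    have h4 : c / ((1 + c * m) * Real.log 2) * |x - m|
        = (c * |x - m| / (1 + c * m)) / Real.log 2 := by
      field_simp
    simp only [Real.logb]
    rw [h4, ← add_div]
    gcongr
    linarith
  calc ∫ x, Real.logb 2 (1 + c * |x|) ∂P
      ≤ ∫ x, (Real.logb 2 (1 + c * m) + c / ((1 + c * m) * Real.log 2) * |x - m|) ∂P := by
        refine integral_mono (gauss_integrable_f c hc m v) ?_ pointwise
        exact (integrable_const _).add ((gauss_integrable_abs m v).const_mul _)
    _ = Real.logb 2 (1 + c * m)
        + c / ((1 + c * m) * Real.log 2) * ∫ x, |x - m| ∂P := by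
        rw [integral_add (integrable_const _) ((gauss_integrable_abs m v).const_mul _),
          integral_const, integral_const_mul]
        simp [P]
    _ ≤ Real.logb 2 (1 + c * m) + c / ((1 + c * m) * Real.log 2) * Real.sqrt v := by
        have h5 := gauss_abs_moment_le m v
        have h6 : (0:ℝ) ≤ c / ((1 + c * m) * Real.log 2) := by positivity
        nlinarith

lemma gauss_markov (m : ℝ) (hm : 0 < m) (v : ℝ≥0) :
    ((gaussianReal m v) (Set.Iio (m / 2))).toReal ≤ 2 * Real.sqrt v / m := by
  set P := gaussianReal m v
  have h1 : ((P (Set.Iio (m / 2))).toReal : ℝ)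
      = ∫ x, (Set.Iio (m / 2)).indicator (fun _ => (1:ℝ)) x ∂P := by
    rw [integral_indicator_const (1:ℝ) measurableSet_Iio]
    simp
    rfl
  have hint : Integrable (fun x => |x - m| / (m / 2)) P :=
    (gauss_integrable_abs m v).div_const _
  have h2 : ∀ x, (Set.Iio (m / 2)).indicator (fun _ => (1:ℝ)) x ≤ |x - m| / (m / 2) := by
    intro x
    by_cases hx : x ∈ Set.Iio (m / 2)
    · rw [Set.indicator_of_mem hx]
      rw [le_div_iff₀ (by positivity)]
      have hxm : x < m / 2 := hx
      calc (1:ℝ) * (m / 2) = m / 2 := one_mul _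
        _ ≤ m - x := by linarith
        _ ≤ |m - x| := le_abs_self _
        _ = |x - m| := abs_sub_comm m x
    · rw [Set.indicator_of_notMem hx]
      positivity
  have h3 := integral_mono ((integrable_const (1:ℝ)).indicator measurableSet_Iio) hint h2
  rw [← h1] at h3
  calc ((P (Set.Iio (m / 2))).toReal : ℝ) ≤ ∫ x, |x - m| / (m / 2) ∂P := h3
    _ = (∫ x, |x - m| ∂P) / (m / 2) := integral_div _ _
    _ ≤ Real.sqrt v / (m / 2) := by have := gauss_abs_moment_le m v; gcongr
    _ = 2 * Real.sqrt v / m := by field_simp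

lemma gauss_lower (c : ℝ) (hc : 0 < c) (m : ℝ) (hm : 0 < m) (v : ℝ≥0) :
    Real.logb 2 (1 + c * (m / 2)) * (1 - 2 * Real.sqrt v / m)
      ≤ ∫ x, Real.logb 2 (1 + c * |x|) ∂(gaussianReal m v) := by
  set P := gaussianReal m v
  have hD'0 : (0:ℝ) ≤ Real.logb 2 (1 + c * (m / 2)) :=
    Real.logb_nonneg one_lt_two (by nlinarith)
  set D' := Real.logb 2 (1 + c * (m / 2)) with hD'
  have pointwise : ∀ x, (Set.Ici (m / 2)).indicator (fun _ => D') x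
      ≤ Real.logb 2 (1 + c * |x|) := by
    intro x
    by_cases hx : x ∈ Set.Ici (m / 2)
    · rw [Set.indicator_of_mem hx, hD']
      have hx' : m / 2 ≤ x := hx
      have hax : m / 2 ≤ |x| := le_trans hx' (le_abs_self x)
      exact Real.logb_le_logb_of_le one_lt_two (by positivity) (by nlinarith)
    · rw [Set.indicator_of_notMem hx]
      exact Real.logb_nonneg one_lt_two (by nlinarith [abs_nonneg x])
  have h4 := integral_mono ((integrable_const D').indicator measurableSet_Ici)
    (gauss_integrable_f c hc m v) pointwise
  rw [integral_indicator_const D' measurableSet_Ici] at h4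
  have h5 : (P (Set.Ici (m / 2))).toReal = 1 - (P (Set.Iio (m / 2))).toReal := by
    have hu : P (Set.Iio (m / 2)) + P (Set.Ici (m / 2)) = 1 := by
      rw [← measure_union (Set.Iio_disjoint_Ici le_rfl) measurableSet_Ici,
        Set.Iio_union_Ici, measure_univ]
    have := congrArg ENNReal.toReal hu
    rw [ENNReal.toReal_add (measure_ne_top _ _) (measure_ne_top _ _)] at this
    simp at this
    linarith
  rw [measureReal_def] at h4
  rw [h5] at h4
  have h6 := gauss_markov m hm v
  have h7 : D' * (1 - 2 * Real.sqrt v / m) ≤ D' * (1 - (P (Set.Iio (m / 2))).toReal) := by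
    gcongr
  calc D' * (1 - 2 * Real.sqrt v / m) ≤ D' * (1 - (P (Set.Iio (m / 2))).toReal) := h7
    _ = (1 - (P (Set.Iio (m / 2))).toReal) • D' := by rw [smul_eq_mul]; ring
    _ ≤ ∫ x, Real.logb 2 (1 + c * |x|) ∂P := h4

theorem stmt17 (c : ℝ) (hc : 0 < c) (μ : ℕ → ℝ) (v : ℕ → NNReal)
    (hμ : Tendsto μ atTop atTop)
    (hv : Tendsto (fun N : ℕ => (v N : ℝ) / μ N ^ 2) atTop (nhds 0)) :
    Tendsto
      (fun N : ℕ =>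
        (∫ x, Real.logb 2 (1 + c * |x|) ∂(gaussianReal (μ N) (v N))) /
          Real.logb 2 (1 + c * μ N))
      atTop (nhds 1) := by
  have hl2 : (0:ℝ) < Real.log 2 := Real.log_pos one_lt_two
  set s : ℕ → ℝ := fun N => Real.sqrt ((v N : ℝ) / μ N ^ 2) with hsdef
  have hs0 : Tendsto s atTop (nhds 0) := by
    have h := (Real.continuous_sqrt.tendsto 0).comp hv
    have : ((fun x => Real.sqrt x) ∘ fun N : ℕ => (v N : ℝ) / μ N ^ 2) = s := rfl
    rw [this] at h
    simpa using h
  have hcμ : Tendsto (fun N => c * μ N) atTop atTop := hμ.const_mul_atTop hc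
  have hμ' : Tendsto (fun N => 1 + c * μ N) atTop atTop :=
    tendsto_atTop_add_const_left _ 1 hcμ
  have hlogμ : Tendsto (fun N => Real.log (1 + c * μ N)) atTop atTop :=
    Real.tendsto_log_atTop.comp hμ'
  have hlow : Tendsto
      (fun N => (1 - 2 * s N) * (1 - Real.log 2 / Real.log (1 + c * μ N)))
      atTop (nhds 1) := by
    have h1 : Tendsto (fun N => 1 - 2 * s N) atTop (nhds (1 - 2 * 0)) :=
      tendsto_const_nhds.sub (hs0.const_mul 2)
    have h2 : Tendsto (fun N => Real.log 2 / Real.log (1 + c * μ N)) atTop (nhds 0) :=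
      Tendsto.div_atTop tendsto_const_nhds hlogμ
    have h3 : Tendsto (fun N => 1 - Real.log 2 / Real.log (1 + c * μ N)) atTop
        (nhds (1 - 0)) := tendsto_const_nhds.sub h2
    have := h1.mul h3
    norm_num at this
    exact this
  have hup : Tendsto (fun N => 1 + 2 * s N) atTop (nhds 1) := by
    have : Tendsto (fun N => 1 + 2 * s N) atTop (nhds (1 + 2 * 0)) :=
      tendsto_const_nhds.add (hs0.const_mul 2)
    norm_num at this
    exact this
  refine tendsto_of_tendsto_of_tendsto_of_le_of_le' hlow hup ?_ ?_
  · -- lower bound eventually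
    filter_upwards [hμ.eventually_ge_atTop 1, hcμ.eventually_ge_atTop 1,
      hs0.eventually_lt_const (by norm_num : (0:ℝ) < 1/4)] with N h1 h2 h3
    set m := μ N with hmdef
    have hm0 : (0:ℝ) < m := by linarith
    have hswm : Real.sqrt ((v N : ℝ)) / m = s N := by
      rw [hsdef]
      simp only
      rw [Real.sqrt_div (v N).coe_nonneg, Real.sqrt_sq hm0.le]
    have hsN0 : 0 ≤ s N := Real.sqrt_nonneg _
    have hD0 : (0:ℝ) < Real.logb 2 (1 + c * m) := Real.logb_pos one_lt_two (by linarith)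
    set L := Real.log (1 + c * m) with hLdef
    have hL2 : Real.log 2 ≤ L := Real.log_le_log (by norm_num) (by linarith)
    have hL0 : 0 < L := lt_of_lt_of_le hl2 hL2
    have hDdef : Real.logb 2 (1 + c * m) = L / Real.log 2 := rfl
    have hD'def : Real.logb 2 (1 + c * (m / 2)) = Real.log (1 + c * (m / 2)) / Real.log 2 := rfl
    have hsum : Real.log 2 + Real.log (1 + c * (m / 2)) = Real.log (2 + c * m) := by
      rw [← Real.log_mul (by norm_num) (by positivity)]
      congr 1
      ring
    have hmono : L ≤ Real.log (2 + c * m) :=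
      Real.log_le_log (by positivity) (by linarith)
    have key : (1 - Real.log 2 / L) * Real.logb 2 (1 + c * m)
        ≤ Real.logb 2 (1 + c * (m / 2)) := by
      rw [hDdef, hD'def]
      have heq : (1 - Real.log 2 / L) * (L / Real.log 2) = (L - Real.log 2) / Real.log 2 := by
        field_simp
      rw [heq]
      gcongr
      linarith
    have h12s : (0:ℝ) ≤ 1 - 2 * s N := by linarith
    have hlow' := gauss_lower c hc m hm0 (v N)
    have hrw : 1 - 2 * Real.sqrt ((v N : ℝ)) / m = 1 - 2 * s N := by
      rw [← hswm]; ring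
    rw [hrw] at hlow'
    rw [le_div_iff₀ hD0]
    calc (1 - 2 * s N) * (1 - Real.log 2 / L) * Real.logb 2 (1 + c * m)
        = (1 - 2 * s N) * ((1 - Real.log 2 / L) * Real.logb 2 (1 + c * m)) := by ring
      _ ≤ (1 - 2 * s N) * Real.logb 2 (1 + c * (m / 2)) :=
          mul_le_mul_of_nonneg_left key h12s
      _ = Real.logb 2 (1 + c * (m / 2)) * (1 - 2 * s N) := mul_comm _ _
      _ ≤ _ := hlow'
  · -- upper bound eventually
    filter_upwards [hμ.eventually_ge_atTop 1, hcμ.eventually_ge_atTop 1] with N h1 h2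
    set m := μ N with hmdef
    have hm0 : (0:ℝ) < m := by linarith
    have hswm : Real.sqrt ((v N : ℝ)) / m = s N := by
      rw [hsdef]
      simp only
      rw [Real.sqrt_div (v N).coe_nonneg, Real.sqrt_sq hm0.le]
    have hsm : Real.sqrt ((v N : ℝ)) = s N * m := by
      rw [← hswm]; field_simp
    have hsN0 : 0 ≤ s N := Real.sqrt_nonneg _
    have hD1 : (1:ℝ) ≤ Real.logb 2 (1 + c * m) := by
      calc (1:ℝ) = Real.logb 2 2 := (Real.logb_self_eq_one one_lt_two).symm
        _ ≤ Real.logb 2 (1 + c * m) :=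
            Real.logb_le_logb_of_le one_lt_two (by norm_num) (by linarith)
    have hD0 : (0:ℝ) < Real.logb 2 (1 + c * m) := by linarith
    have h1cm : (0:ℝ) < 1 + c * m := by positivity
    have hupper := gauss_upper c hc m hm0.le (v N)
    have hlog2half : (1:ℝ)/2 < Real.log 2 := by
      have := Real.log_two_gt_d9
      linarith
    have hT : c / ((1 + c * m) * Real.log 2) * Real.sqrt ((v N : ℝ)) ≤ 2 * s N := by
      rw [hsm, div_mul_eq_mul_div, div_le_iff₀ (by positivity)]
      have hkey : 0 ≤ s N * (2 * Real.log 2 + c * m * (2 * Real.log 2 - 1)) := by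
        have : (0:ℝ) ≤ 2 * Real.log 2 + c * m * (2 * Real.log 2 - 1) := by nlinarith
        exact mul_nonneg hsN0 this
      nlinarith
    rw [div_le_iff₀ hD0]
    have hI : (∫ x, Real.logb 2 (1 + c * |x|) ∂(gaussianReal m (v N)))
        ≤ Real.logb 2 (1 + c * m) + 2 * s N := by
      calc (∫ x, Real.logb 2 (1 + c * |x|) ∂(gaussianReal m (v N)))
          ≤ Real.logb 2 (1 + c * m)
            + c / ((1 + c * m) * Real.log 2) * Real.sqrt ((v N : ℝ)) := hupper
        _ ≤ Real.logb 2 (1 + c * m) + 2 * s N := by linarith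
    nlinarith [hI, hD1, hsN0]
end

section
/- Let K ≥ 1 be a fixed integer, ρ > 0, and for each k ∈ {1, …, K} let β_k > 0. For each N, let X_{1,N}, …, X_{K,N} be independent real Gaussian random variables with X_{k,N} ~ N(μ_{k,N}, σ_{k,N}²), where μ_{k,N} → ∞ and σ_{k,N}²/μ_{k,N}² → 0 as N → ∞, and set R_N := Σ_{k=1}^K log₂(1 + ρ β_k |X_{k,N}|). Then Var(R_N)/(E[R_N])² → 0 as N → ∞. -/
open MeasureTheory ProbabilityTheory Filter Real
open scoped NNReal ENNReal

namespace Stmt19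

lemma sq_mul_pdf_le (v : ℝ) (hv : 0 < v) (z : ℝ) :
    z ^ 2 * rexp (- z ^ 2 / (2 * v)) ≤ 4 * v * rexp (- z ^ 2 / (4 * v)) := by
  have key : z ^ 2 * rexp (- z ^ 2 / (4 * v)) ≤ 4 * v := by
    have h1 : z ^ 2 ≤ 4 * v * rexp (z ^ 2 / (4 * v)) := by
      have h := Real.add_one_le_exp (z ^ 2 / (4 * v))
      have hz : z ^ 2 = 4 * v * (z ^ 2 / (4 * v)) := by field_simp
      nlinarith [div_nonneg (sq_nonneg z) (by linarith : (0:ℝ) ≤ 4 * v)]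
    have h2 : rexp (- z ^ 2 / (4 * v)) = (rexp (z ^ 2 / (4 * v)))⁻¹ := by
      rw [← Real.exp_neg]; ring_nf
    rw [h2, mul_inv_le_iff₀ (Real.exp_pos _)]
    linarith
  have hsplit : rexp (- z ^ 2 / (2 * v)) = rexp (- z ^ 2 / (4 * v)) * rexp (- z ^ 2 / (4 * v)) := by
    rw [← Real.exp_add]; ring_nf
  calc z ^ 2 * rexp (- z ^ 2 / (2 * v))
      = (z ^ 2 * rexp (- z ^ 2 / (4 * v))) * rexp (- z ^ 2 / (4 * v)) := by rw [hsplit]; ring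
    _ ≤ 4 * v * rexp (- z ^ 2 / (4 * v)) :=
        mul_le_mul_of_nonneg_right key (Real.exp_pos _).le

variable {μ : ℝ} {v : ℝ≥0}

lemma pdf_meas (μ : ℝ) (v : ℝ≥0) : Measurable (fun x => (gaussianPDFReal μ v x).toNNReal) :=
  (measurable_gaussianPDFReal μ v).real_toNNReal

lemma gaussian_eq_withDensity (hv : v ≠ 0) :
    gaussianReal μ v
      = volume.withDensity (fun x => ((gaussianPDFReal μ v x).toNNReal : ℝ≥0∞)) := by
  rw [gaussianReal_of_var_ne_zero _ hv]
  rfl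

lemma integrable_dominator (μ : ℝ) (hv : v ≠ 0) :
    Integrable (fun x : ℝ => (√(2 * π * (v:ℝ)))⁻¹ * (4 * (v:ℝ) * rexp (- (x - μ) ^ 2 / (4 * (v:ℝ))))) := by
  have hv' : (0:ℝ) < v := by positivity
  have hb : (0:ℝ) < 1 / (4 * (v:ℝ)) := by positivity
  have h := ((integrable_exp_neg_mul_sq hb).comp_sub_right μ).const_mul
      ((√(2 * π * (v:ℝ)))⁻¹ * (4 * (v:ℝ)))
  refine h.congr (Filter.Eventually.of_forall fun x => ?_)
  have hexp : rexp (-(1 / (4 * (v:ℝ))) * (x - μ) ^ 2) = rexp (- (x - μ) ^ 2 / (4 * (v:ℝ))) := by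
    rw [Real.exp_eq_exp]; field_simp
  simp only [hexp, mul_assoc]

end Stmt19

namespace Stmt19

lemma pdf_smul_le (hv : v ≠ 0) (x : ℝ) :
    gaussianPDFReal μ v x * (x - μ) ^ 2
      ≤ (√(2 * π * (v:ℝ)))⁻¹ * (4 * (v:ℝ) * rexp (- (x - μ) ^ 2 / (4 * (v:ℝ)))) := by
  have hv' : (0:ℝ) < v := by positivity
  rw [gaussianPDFReal]
  have h := sq_mul_pdf_le (v:ℝ) hv' (x - μ)
  have h0 : (0:ℝ) ≤ (√(2 * π * (v:ℝ)))⁻¹ := by positivity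
  calc (√(2 * π * (v:ℝ)))⁻¹ * rexp (- (x - μ) ^ 2 / (2 * (v:ℝ))) * (x - μ) ^ 2
      = (√(2 * π * (v:ℝ)))⁻¹ * ((x - μ) ^ 2 * rexp (- (x - μ) ^ 2 / (2 * (v:ℝ)))) := by ring
    _ ≤ _ := mul_le_mul_of_nonneg_left h h0

lemma integrable_sq_gaussian (μ : ℝ) (v : ℝ≥0) :
    Integrable (fun x => (x - μ) ^ 2) (gaussianReal μ v) := by
  by_cases hv : v = 0
  · subst hv
    rw [gaussianReal_zero_var]
    exact (integrable_const _).congr (MeasureTheory.ae_eq_dirac (fun x : ℝ => (x - μ) ^ 2)).symm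
  · rw [gaussian_eq_withDensity hv,
      integrable_withDensity_iff_integrable_smul (pdf_meas μ v)]
    refine (integrable_dominator μ hv).mono' ?_ (Filter.Eventually.of_forall fun x => ?_)
    · exact ((pdf_meas μ v).coe_nnreal_real.mul (by fun_prop)).aestronglyMeasurable
    · have hnn : (0:ℝ) ≤ gaussianPDFReal μ v x := gaussianPDFReal_nonneg μ v x
      have : ((gaussianPDFReal μ v x).toNNReal : ℝ) = gaussianPDFReal μ v x :=
        Real.coe_toNNReal _ hnn
      rw [NNReal.smul_def, smul_eq_mul, this, Real.norm_eq_abs,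
        abs_of_nonneg (by positivity)]
      exact pdf_smul_le hv x

lemma integral_sq_gaussian_le (μ : ℝ) (v : ℝ≥0) :
    ∫ x, (x - μ) ^ 2 ∂(gaussianReal μ v) ≤ 6 * (v:ℝ) := by
  by_cases hv : v = 0
  · subst hv
    rw [gaussianReal_zero_var, integral_dirac]
    simp
  · have hv' : (0:ℝ) < v := by positivity
    have hint : Integrable (fun x => (gaussianPDFReal μ v x).toNNReal • (x - μ) ^ 2) := by
      have := integrable_sq_gaussian μ v
      rwa [gaussian_eq_withDensity hv,
        integrable_withDensity_iff_integrable_smul (pdf_meas μ v)] at this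
    rw [gaussian_eq_withDensity hv, integral_withDensity_eq_integral_smul (pdf_meas μ v)]
    have hle : ∫ x, (gaussianPDFReal μ v x).toNNReal • (x - μ) ^ 2
        ≤ ∫ x, (√(2 * π * (v:ℝ)))⁻¹ * (4 * (v:ℝ) * rexp (- (x - μ) ^ 2 / (4 * (v:ℝ)))) := by
      refine integral_mono hint (integrable_dominator μ hv) fun x => ?_
      have hnn : (0:ℝ) ≤ gaussianPDFReal μ v x := gaussianPDFReal_nonneg μ v x
      have hco : ((gaussianPDFReal μ v x).toNNReal : ℝ) = gaussianPDFReal μ v x :=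
        Real.coe_toNNReal _ hnn
      simp only [NNReal.smul_def, smul_eq_mul, hco]
      exact pdf_smul_le hv x
    refine hle.trans ?_
    rw [integral_const_mul, integral_const_mul]
    have hsub : ∫ x : ℝ, rexp (- (x - μ) ^ 2 / (4 * (v:ℝ)))
        = ∫ x : ℝ, rexp (- x ^ 2 / (4 * (v:ℝ))) := by
      exact integral_sub_right_eq_self (fun z => rexp (- z ^ 2 / (4 * (v:ℝ)))) μ
    rw [hsub]
    have hexp : ∀ z : ℝ, rexp (- z ^ 2 / (4 * (v:ℝ))) = rexp (-(1 / (4 * (v:ℝ))) * z ^ 2) := by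
      intro z; rw [Real.exp_eq_exp]; field_simp
    simp_rw [hexp]
    rw [integral_gaussian]
    have hval : √(π / (1 / (4 * (v:ℝ)))) = √2 * √(2 * π * (v:ℝ)) := by
      rw [← Real.sqrt_mul (by norm_num : (0:ℝ) ≤ 2)]
      congr 1
      field_simp
      ring
    rw [hval]
    have hs : √(2 * π * (v:ℝ)) ≠ 0 := by positivity
    have : (√(2 * π * (v:ℝ)))⁻¹ * (4 * (v:ℝ) * (√2 * √(2 * π * (v:ℝ))))
        = 4 * √2 * (v:ℝ) := by
      field_simp
    rw [this]
    nlinarith [Real.sq_sqrt (show (0:ℝ) ≤ 2 by norm_num), Real.sqrt_nonneg 2, hv'.le]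

end Stmt19

namespace Stmt19

lemma log_div_le {p q : ℝ} (hp : 0 < p) (hq : 0 < q) :
    Real.log p - Real.log q ≤ (p - q) / q := by
  rw [← Real.log_div hp.ne' hq.ne']
  have h := Real.log_le_sub_one_of_pos (div_pos hp hq)
  have : p / q - 1 = (p - q) / q := by field_simp
  linarith

set_option maxHeartbeats 1000000 in
lemma master {a μlocal w : ℝ} (ha : 0 < a) (hμ : 0 < μlocal) (hw : 0 < w) (x : ℝ) :
    (Real.log (1 + a * |x|) - Real.log (1 + a * μlocal)) ^ 2
      ≤ ((1 + 2 * (Real.log (1 + a * Real.sqrt w)) ^ 2) * (4 / μlocal ^ 2) + 2 / w)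
          * (x - μlocal) ^ 2 := by
  set d := |x - μlocal| with hd_def
  have hd0 : 0 ≤ d := abs_nonneg _
  have hdsq : d ^ 2 = (x - μlocal) ^ 2 := sq_abs _
  set L := Real.log (1 + a * Real.sqrt w) with hL_def
  have hL0 : 0 ≤ L := Real.log_nonneg
    (by nlinarith [mul_nonneg ha.le (Real.sqrt_nonneg w)])
  have hxq : (0:ℝ) < 1 + a * |x| := by positivity
  have hmq : (0:ℝ) < 1 + a * μlocal := by positivity
  have habs1 : |x| - μlocal ≤ d := by
    have h := abs_sub_abs_le_abs_sub x μlocal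
    rw [abs_of_pos hμ] at h
    exact h
  have habs2 : μlocal - |x| ≤ d := by
    have h := abs_sub_abs_le_abs_sub μlocal x
    rw [abs_of_pos hμ, abs_sub_comm] at h
    exact h
  rw [← hdsq]
  by_cases hcase : d ≤ μlocal / 2
  · -- Lipschitz regime
    have hxlb : μlocal / 2 ≤ |x| := by
      have hx : μlocal - d ≤ x := by
        have := abs_sub_abs_le_abs_sub x μlocal
        have h' := neg_abs_le (x - μlocal)
        linarith [h']
      have : μlocal / 2 ≤ x := by linarith
      exact le_trans this (le_abs_self x)
    have hA : Real.log (1 + a * |x|) - Real.log (1 + a * μlocal) ≤ 2 * d / μlocal := by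
      have h1 := log_div_le hxq hmq
      have h2 : (1 + a * |x| - (1 + a * μlocal)) / (1 + a * μlocal) ≤ 2 * d / μlocal := by
        rw [div_le_div_iff₀ hmq hμ]
        nlinarith [mul_le_mul_of_nonneg_left habs1 ha.le]
      linarith
    have hB : Real.log (1 + a * μlocal) - Real.log (1 + a * |x|) ≤ 2 * d / μlocal := by
      have h1 := log_div_le hmq hxq
      have h2 : (1 + a * μlocal - (1 + a * |x|)) / (1 + a * |x|) ≤ 2 * d / μlocal := by
        rw [div_le_div_iff₀ hxq hμ]
        nlinarith [mul_le_mul_of_nonneg_left habs2 ha.le,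
          mul_le_mul_of_nonneg_left hxlb (mul_nonneg ha.le hd0)]
      linarith
    have hsq : (Real.log (1 + a * |x|) - Real.log (1 + a * μlocal)) ^ 2 ≤ (2 * d / μlocal) ^ 2 :=
      sq_le_sq' (by linarith) hA
    have hrest : (2 * d / μlocal) ^ 2 = 4 / μlocal ^ 2 * d ^ 2 := by
      field_simp; ring
    have hpos1 : (0:ℝ) ≤ 4 / μlocal ^ 2 * d ^ 2 :=
      mul_nonneg (div_nonneg (by norm_num) (sq_nonneg _)) (sq_nonneg d)
    have hpos2 : (0:ℝ) ≤ 2 / w * d ^ 2 :=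
      mul_nonneg (div_nonneg (by norm_num) hw.le) (sq_nonneg d)
    have hmul : 4 / μlocal ^ 2 * d ^ 2 ≤ (1 + 2 * L ^ 2) * (4 / μlocal ^ 2 * d ^ 2) :=
      le_mul_of_one_le_left hpos1 (by nlinarith [sq_nonneg L])
    have hring : ((1 + 2 * L ^ 2) * (4 / μlocal ^ 2) + 2 / w) * d ^ 2
        = (1 + 2 * L ^ 2) * (4 / μlocal ^ 2 * d ^ 2) + 2 / w * d ^ 2 := by ring
    linarith
  · -- tail regime
    push_neg at hcase
    have hsw : (0:ℝ) < Real.sqrt w := Real.sqrt_pos.mpr hw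
    set q : ℝ := d / Real.sqrt w with hq_def
    have hq0 : 0 ≤ q := div_nonneg hd0 hsw.le
    have hqsq : q ^ 2 = d ^ 2 / w := by
      rw [hq_def, div_pow, Real.sq_sqrt hw.le]
    -- |ℓx - ℓμ| ≤ L + q
    have hC : Real.log (1 + a * |x|) - Real.log (1 + a * μlocal) ≤ L + q := by
      have hmono : 1 + a * |x| ≤ (1 + a * μlocal) * (1 + a * d) := by
        nlinarith [mul_nonneg (mul_nonneg ha.le hμ.le) (mul_nonneg ha.le hd0)]
      have h1 : Real.log (1 + a * |x|) ≤ Real.log ((1 + a * μlocal) * (1 + a * d)) :=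
        Real.log_le_log hxq hmono
      rw [Real.log_mul hmq.ne' (by positivity)] at h1
      have h2 : Real.log (1 + a * d) ≤ L + q := by
        have hmono2 : 1 + a * d ≤ (1 + a * Real.sqrt w) * (1 + d / Real.sqrt w) := by
          have heq : a * Real.sqrt w * (d / Real.sqrt w) = a * d := by
            field_simp
          nlinarith [heq, mul_nonneg ha.le hsw.le, div_nonneg hd0 hsw.le]
        have h3 : Real.log (1 + a * d) ≤ Real.log ((1 + a * Real.sqrt w) * (1 + d / Real.sqrt w)) :=
          Real.log_le_log (by positivity) hmono2
        rw [Real.log_mul (by positivity) (by positivity)] at h3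
        have h4 : Real.log (1 + d / Real.sqrt w) ≤ d / Real.sqrt w := by
          have := Real.log_le_sub_one_of_pos (show (0:ℝ) < 1 + d / Real.sqrt w by positivity)
          linarith
        rw [hL_def, hq_def]
        linarith
      linarith
    have hD : Real.log (1 + a * μlocal) - Real.log (1 + a * |x|) ≤ L + q := by
      have hmono : 1 + a * μlocal ≤ (1 + a * |x|) * (1 + a * d) := by
        nlinarith [mul_nonneg (mul_nonneg ha.le (abs_nonneg x)) (mul_nonneg ha.le hd0)]
      have h1 : Real.log (1 + a * μlocal) ≤ Real.log ((1 + a * |x|) * (1 + a * d)) :=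
        Real.log_le_log hmq hmono
      rw [Real.log_mul hxq.ne' (by positivity)] at h1
      have h2 : Real.log (1 + a * d) ≤ L + q := by
        have hmono2 : 1 + a * d ≤ (1 + a * Real.sqrt w) * (1 + d / Real.sqrt w) := by
          have heq : a * Real.sqrt w * (d / Real.sqrt w) = a * d := by
            field_simp
          nlinarith [heq, mul_nonneg ha.le hsw.le, div_nonneg hd0 hsw.le]
        have h3 : Real.log (1 + a * d) ≤ Real.log ((1 + a * Real.sqrt w) * (1 + d / Real.sqrt w)) :=
          Real.log_le_log (by positivity) hmono2
        rw [Real.log_mul (by positivity) (by positivity)] at h3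
        have h4 : Real.log (1 + d / Real.sqrt w) ≤ d / Real.sqrt w := by
          have := Real.log_le_sub_one_of_pos (show (0:ℝ) < 1 + d / Real.sqrt w by positivity)
          linarith
        rw [hL_def, hq_def]
        linarith
      linarith
    have hsq : (Real.log (1 + a * |x|) - Real.log (1 + a * μlocal)) ^ 2 ≤ (L + q) ^ 2 :=
      sq_le_sq' (by linarith) hC
    have hdd : 1 ≤ (2 * d / μlocal) ^ 2 := by
      have h1 : (1:ℝ) < 2 * d / μlocal := by
        rw [lt_div_iff₀ hμ]; linarith
      nlinarith
    have hdd' : (2 * d / μlocal) ^ 2 = 4 / μlocal ^ 2 * d ^ 2 := by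
      field_simp; ring
    have hE : (L + q) ^ 2 ≤ 2 * L ^ 2 + 2 * q ^ 2 := by nlinarith [sq_nonneg (L - q)]
    have h5 : 2 * L ^ 2 ≤ (1 + 2 * L ^ 2) * (4 / μlocal ^ 2 * d ^ 2) := by
      rw [← hdd']
      nlinarith [sq_nonneg L]
    have h6 : 2 * q ^ 2 = 2 / w * d ^ 2 := by rw [hqsq]; ring
    have hring : ((1 + 2 * L ^ 2) * (4 / μlocal ^ 2) + 2 / w) * d ^ 2
        = (1 + 2 * L ^ 2) * (4 / μlocal ^ 2 * d ^ 2) + 2 / w * d ^ 2 := by ring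
    linarith

end Stmt19

namespace Stmt19

noncomputable def F (a : ℝ) : ℝ → ℝ := fun x => Real.logb 2 (1 + a * |x|)

lemma F_arg_pos {a : ℝ} (ha : 0 < a) (x : ℝ) : (0:ℝ) < 1 + a * |x| := by
  nlinarith [abs_nonneg x, mul_nonneg ha.le (abs_nonneg x)]

lemma F_eq (a : ℝ) (x : ℝ) : F a x = Real.log (1 + a * |x|) / Real.log 2 := by
  simp [F, Real.logb]

lemma F_cont {a : ℝ} (ha : 0 < a) : Continuous (F a) := by
  have h : Continuous fun x : ℝ => Real.log (1 + a * |x|) :=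
    (continuous_const.add (continuous_const.mul continuous_abs)).log
      fun x => (F_arg_pos ha x).ne'
  have : F a = fun x => Real.log (1 + a * |x|) / Real.log 2 := funext (F_eq a)
  rw [this]
  exact h.div_const _

lemma F_nonneg {a : ℝ} (ha : 0 < a) (x : ℝ) : 0 ≤ F a x :=
  Real.logb_nonneg one_lt_two (by nlinarith [mul_nonneg ha.le (abs_nonneg x)])

lemma memℒp_F {a : ℝ} (ha : 0 < a) (μ : ℝ) (v : ℝ≥0) :
    MemLp (F a) 2 (gaussianReal μ v) := by
  have hint_sq : Integrable (fun x : ℝ => x ^ 2) (gaussianReal μ v) := by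
    refine (((integrable_sq_gaussian μ v).const_mul 2).add
      (integrable_const (2 * μ ^ 2))).mono' (by fun_prop)
      (Filter.Eventually.of_forall fun x => ?_)
    simp only [Pi.add_apply]
    rw [Real.norm_eq_abs, abs_of_nonneg (sq_nonneg x)]
    nlinarith [sq_nonneg (x - 2 * μ)]
  have hid : MemLp (fun x : ℝ => x) 2 (gaussianReal μ v) := by
    rw [show (fun x : ℝ => x) = id from rfl,
      memLp_two_iff_integrable_sq (aestronglyMeasurable_id (α := ℝ) (μ := gaussianReal μ v))]
    simpa using hint_sq
  have hg : MemLp (fun x : ℝ => a / Real.log 2 * x) 2 (gaussianReal μ v) := hid.const_mul _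
  refine MemLp.of_le hg (F_cont ha).aestronglyMeasurable
    (Filter.Eventually.of_forall fun x => ?_)
  have hlog2 : (0:ℝ) < Real.log 2 := Real.log_pos one_lt_two
  have hF1 : F a x ≤ a * |x| / Real.log 2 := by
    rw [F_eq]
    have h := Real.log_le_sub_one_of_pos (F_arg_pos ha x)
    have h2 : Real.log (1 + a * |x|) ≤ a * |x| := by linarith
    gcongr
  have : ‖a / Real.log 2 * x‖ = a * |x| / Real.log 2 := by
    rw [norm_mul, Real.norm_eq_abs, Real.norm_eq_abs, abs_of_pos (by positivity : (0:ℝ) < a / Real.log 2)]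
    field_simp
  rw [this, Real.norm_eq_abs, abs_of_nonneg (F_nonneg ha x)]
  exact hF1

end Stmt19

namespace Stmt19

lemma variance_sub_const {α : Type*} [MeasurableSpace α] (P : Measure α)
    [IsProbabilityMeasure P] {Y : α → ℝ} (hY : Integrable Y P) (c : ℝ) :
    variance (fun ω => Y ω - c) P = variance Y P := by
  have hm : ∫ ω, (Y ω - c) ∂P = (∫ ω, Y ω ∂P) - c := by
    rw [integral_sub hY (integrable_const c), integral_const]
    simp
  simp only [variance, evariance]
  congr 1
  refine lintegral_congr fun ω => ?_
  congr 2
  rw [hm]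
  ring

lemma mean_lb {a μ : ℝ} {v : ℝ≥0} (ha : 0 < a) (hμ : 0 < μ) (h2 : (v:ℝ) ≤ μ ^ 2 / 48) :
    Real.logb 2 (1 + a * (μ / 2)) / 2 ≤ ∫ x, F a x ∂(gaussianReal μ v) := by
  set γ := gaussianReal μ v with hγ
  have hm1 : 0 ≤ Real.logb 2 (1 + a * (μ / 2)) :=
    Real.logb_nonneg one_lt_two (by nlinarith)
  -- Chebyshev-type bound
  have hcheb : (γ (Set.Iio (μ / 2))).toReal ≤ 1 / 2 := by
    have h1 : (γ (Set.Iio (μ / 2))).toReal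
        = ∫ x, (Set.Iio (μ / 2)).indicator (fun _ => (1:ℝ)) x ∂γ :=
      (integral_indicator_one measurableSet_Iio).symm
    have hind : ∀ x : ℝ, (Set.Iio (μ / 2)).indicator (fun _ => (1:ℝ)) x
        ≤ 4 / μ ^ 2 * (x - μ) ^ 2 := by
      intro x
      by_cases hx : x ∈ Set.Iio (μ / 2)
      · rw [Set.indicator_of_mem hx]
        have hxm : μ / 2 ≤ μ - x := by
          simp only [Set.mem_Iio] at hx
          linarith
        have hq : (μ / 2) ^ 2 ≤ (x - μ) ^ 2 := by nlinarith
        rw [show 4 / μ ^ 2 * (x - μ) ^ 2 = 4 * (x - μ) ^ 2 / μ ^ 2 by ring,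
          le_div_iff₀ (by positivity : (0:ℝ) < μ ^ 2)]
        nlinarith
      · rw [Set.indicator_of_notMem hx]
        exact mul_nonneg (by positivity) (sq_nonneg _)
    have h2' : ∫ x, (Set.Iio (μ / 2)).indicator (fun _ => (1:ℝ)) x ∂γ
        ≤ ∫ x, 4 / μ ^ 2 * (x - μ) ^ 2 ∂γ :=
      integral_mono ((integrable_const (1:ℝ)).indicator measurableSet_Iio)
        ((integrable_sq_gaussian μ v).const_mul _) hind
    rw [h1]
    rw [integral_const_mul] at h2'
    have h3 : 4 / μ ^ 2 * ∫ x, (x - μ) ^ 2 ∂γ ≤ 4 / μ ^ 2 * (6 * (v:ℝ)) := by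
      exact mul_le_mul_of_nonneg_left (integral_sq_gaussian_le μ v) (by positivity)
    have h4 : 4 / μ ^ 2 * (6 * (v:ℝ)) ≤ 1 / 2 := by
      rw [div_mul_eq_mul_div, div_le_div_iff₀ (by positivity) (by norm_num)]
      nlinarith
    linarith
  have hT : 1 / 2 ≤ (γ (Set.Ici (μ / 2))).toReal := by
    have hcompl : Set.Ici (μ / 2) = (Set.Iio (μ / 2))ᶜ := Set.compl_Iio.symm
    have hprob : γ (Set.Iio (μ / 2)) ≤ 1 := prob_le_one
    rw [hcompl, measure_compl measurableSet_Iio (measure_ne_top γ _), measure_univ,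
      ENNReal.toReal_sub_of_le hprob ENNReal.one_ne_top]
    simp only [ENNReal.toReal_one]
    linarith
  have hpoint : ∀ x : ℝ,
      (Set.Ici (μ / 2)).indicator (fun _ => Real.logb 2 (1 + a * (μ / 2))) x ≤ F a x := by
    intro x
    by_cases hx : x ∈ Set.Ici (μ / 2)
    · rw [Set.indicator_of_mem hx]
      simp only [Set.mem_Ici] at hx
      rw [F_eq, Real.logb]
      have hlog2 : (0:ℝ) < Real.log 2 := Real.log_pos one_lt_two
      have hxabs : μ / 2 ≤ |x| := le_trans hx (le_abs_self x)
      have hmono : Real.log (1 + a * (μ / 2)) ≤ Real.log (1 + a * |x|) :=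
        Real.log_le_log (by nlinarith) (by nlinarith [mul_le_mul_of_nonneg_left hxabs ha.le])
      exact div_le_div_of_nonneg_right hmono hlog2.le
    · rw [Set.indicator_of_notMem hx]
      exact F_nonneg ha x
  have hFint : Integrable (F a) γ := (memℒp_F ha μ v).integrable one_le_two
  have hmono : ∫ x, (Set.Ici (μ / 2)).indicator (fun _ => Real.logb 2 (1 + a * (μ / 2))) x ∂γ
      ≤ ∫ x, F a x ∂γ :=
    integral_mono ((integrable_const _).indicator measurableSet_Ici) hFint hpoint
  rw [integral_indicator_const _ measurableSet_Ici, measureReal_def] at hmono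
  have : Real.logb 2 (1 + a * (μ / 2)) / 2
      ≤ (γ (Set.Ici (μ / 2))).toReal • Real.logb 2 (1 + a * (μ / 2)) := by
    rw [smul_eq_mul]
    nlinarith
  linarith

end Stmt19

namespace Stmt19

set_option maxHeartbeats 4000000 in
lemma key {a : ℝ} (ha : 0 < a) {ε : ℝ} (hε : 0 < ε) (μ : ℝ) (v : ℝ≥0)
    (h1 : 6 / a ≤ μ) (h2 : (v:ℝ) ≤ μ ^ 2 / 48)
    (h3 : (v:ℝ) / μ ^ 2 ≤ ε / 2304)
    (h4 : 216 ≤ ε * (Real.logb 2 (1 + a * (μ / 2)) / 2) ^ 2) :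
    1 ≤ ∫ x, F a x ∂(gaussianReal μ v) ∧
    variance (F a) (gaussianReal μ v)
      ≤ ε * (∫ x, F a x ∂(gaussianReal μ v)) ^ 2 := by
  have hμ : 0 < μ := lt_of_lt_of_le (by positivity) h1
  have haμ : 6 ≤ a * μ := by
    rw [div_le_iff₀ ha] at h1
    linarith [h1]
  set m₁ : ℝ := Real.logb 2 (1 + a * (μ / 2)) with hm₁
  have hlog2 : (0:ℝ) < Real.log 2 := Real.log_pos one_lt_two
  have hm₁2 : 2 ≤ m₁ := by
    rw [hm₁, Real.logb, le_div_iff₀ hlog2]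
    have h4le : (4:ℝ) ≤ 1 + a * (μ / 2) := by nlinarith
    have : Real.log 4 ≤ Real.log (1 + a * (μ / 2)) :=
      Real.log_le_log (by norm_num) h4le
    have hlog4 : Real.log 4 = 2 * Real.log 2 := by
      rw [show (4:ℝ) = 2 ^ 2 by norm_num, Real.log_pow]
      push_cast; ring
    linarith
  have hmean : m₁ / 2 ≤ ∫ x, F a x ∂(gaussianReal μ v) := mean_lb ha hμ h2
  have hmean1 : 1 ≤ ∫ x, F a x ∂(gaussianReal μ v) := by linarith
  refine ⟨hmean1, ?_⟩
  -- reduce to showing variance ≤ ε * (m₁/2)^2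
  have hfinal : ε * (m₁ / 2) ^ 2 ≤ ε * (∫ x, F a x ∂(gaussianReal μ v)) ^ 2 := by
    have h0 : 0 ≤ m₁ / 2 := by linarith
    have := pow_le_pow_left₀ h0 hmean 2
    nlinarith
  suffices hvar : variance (F a) (gaussianReal μ v) ≤ ε * (m₁ / 2) ^ 2 by linarith
  by_cases hv : v = 0
  · subst hv
    have hmem : MemLp (F a) 2 (gaussianReal μ 0) := memℒp_F ha μ 0
    rw [variance_eq_sub hmem, gaussianReal_zero_var]
    rw [integral_dirac, integral_dirac]
    simp only [Pi.pow_apply]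
    have : F a μ ^ 2 - F a μ ^ 2 = 0 := by ring
    rw [this]
    positivity
  · -- main case
    set γ := gaussianReal μ v with hγ
    have hw : (0:ℝ) < (v:ℝ) := by positivity
    set w : ℝ := (v:ℝ) with hwdef
    set L : ℝ := Real.log (1 + a * Real.sqrt w) with hLdef
    have hL0 : 0 ≤ L := Real.log_nonneg (by nlinarith [mul_nonneg ha.le (Real.sqrt_nonneg w)])
    set c : ℝ := ((1 + 2 * L ^ 2) * (4 / μ ^ 2) + 2 / w) / (Real.log 2) ^ 2 with hcdef
    have hc0 : 0 ≤ c := by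
      apply div_nonneg _ (sq_nonneg _)
      have : (0:ℝ) ≤ (1 + 2 * L ^ 2) * (4 / μ ^ 2) := by positivity
      have h2w : (0:ℝ) ≤ 2 / w := by positivity
      linarith
    have hFmem : MemLp (F a) 2 γ := memℒp_F ha μ v
    have hFint : Integrable (F a) γ := hFmem.integrable one_le_two
    -- step 1: center
    have hstep1 : variance (F a) γ = variance (fun x => F a x - F a μ) γ :=
      (variance_sub_const γ hFint (F a μ)).symm
    -- step 2: variance ≤ second moment
    have hGmem : MemLp (fun x => F a x - F a μ) 2 γ := hFmem.sub (memLp_const (F a μ))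
    have hstep2 : variance (fun x => F a x - F a μ) γ
        ≤ ∫ x, (F a x - F a μ) ^ 2 ∂γ := by
      have h := variance_le_expectation_sq (μ := γ) (X := fun x => F a x - F a μ)
        hGmem.aestronglyMeasurable
      simpa [Pi.pow_apply] using h
    -- step 3: pointwise domination
    have hsqint : Integrable (fun x => (F a x - F a μ) ^ 2) γ := by
      have := hGmem.integrable_sq
      simpa [Pi.pow_apply] using this
    have hpoint : ∀ x : ℝ, (F a x - F a μ) ^ 2 ≤ c * (x - μ) ^ 2 := by
      intro x
      have hmast := master ha hμ hw x
      have hFx : F a x = Real.log (1 + a * |x|) / Real.log 2 := F_eq a x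
      have hFμ : F a μ = Real.log (1 + a * μ) / Real.log 2 := by
        rw [F_eq, abs_of_pos hμ]
      rw [hFx, hFμ, div_sub_div_same, div_pow]
      rw [hcdef, div_mul_eq_mul_div]
      exact div_le_div_of_nonneg_right hmast (sq_nonneg _)
    have hstep3 : ∫ x, (F a x - F a μ) ^ 2 ∂γ ≤ ∫ x, c * (x - μ) ^ 2 ∂γ :=
      integral_mono hsqint ((integrable_sq_gaussian μ v).const_mul c) hpoint
    have hstep4 : ∫ x, c * (x - μ) ^ 2 ∂γ ≤ c * (6 * w) := by
      rw [integral_const_mul]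
      exact mul_le_mul_of_nonneg_left (integral_sq_gaussian_le μ v) hc0
    -- numeric endgame
    set t : ℝ := w / μ ^ 2 with htdef
    have ht0 : 0 ≤ t := by positivity
    have ht48 : t ≤ 1 / 48 := by
      rw [htdef, div_le_div_iff₀ (by positivity) (by norm_num)]
      nlinarith
    have htε : t ≤ ε / 2304 := h3
    have hident : c * (6 * w) = (24 * t * (1 + 2 * L ^ 2) + 12) / (Real.log 2) ^ 2 := by
      rw [hcdef, htdef]
      field_simp
      ring
    have hlog2lb : (0.6931471803 : ℝ) < Real.log 2 := Real.log_two_gt_d9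
    have hlog2ub : Real.log 2 < 0.6931471808 := Real.log_two_lt_d9
    -- L ≤ 2 * m₁ * log 2
    have hLub : L ≤ 2 * m₁ * Real.log 2 := by
      have hsw : Real.sqrt w ≤ μ := by
        have h1' : w ≤ μ ^ 2 := by nlinarith
        calc Real.sqrt w ≤ Real.sqrt (μ ^ 2) := Real.sqrt_le_sqrt h1'
          _ = μ := by rw [Real.sqrt_sq hμ.le]
      have hL1 : L ≤ Real.log (1 + a * μ) := by
        rw [hLdef]
        exact Real.log_le_log (by nlinarith [mul_nonneg ha.le (Real.sqrt_nonneg w)])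
          (by nlinarith [mul_le_mul_of_nonneg_left hsw ha.le])
      have hL2 : Real.log (1 + a * μ) ≤ Real.log (2 * (1 + a * (μ / 2))) :=
        Real.log_le_log (by nlinarith) (by nlinarith)
      have hL3 : Real.log (2 * (1 + a * (μ / 2))) = Real.log 2 + m₁ * Real.log 2 := by
        rw [Real.log_mul (by norm_num) (by nlinarith), hm₁, Real.logb,
          div_mul_cancel₀ _ hlog2.ne']
      have hL4 : Real.log 2 ≤ m₁ * Real.log 2 := by nlinarith
      linarith
    have hLsq : L ^ 2 ≤ 2 * m₁ ^ 2 := by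
      have hmm := mul_le_mul hLub hLub hL0 (by nlinarith)
      have hlogsq : (Real.log 2) ^ 2 ≤ (0.481 : ℝ) := by nlinarith
      have hA : L ^ 2 ≤ 4 * m₁ ^ 2 * (Real.log 2) ^ 2 := by nlinarith [hmm]
      have hB : 4 * m₁ ^ 2 * (Real.log 2) ^ 2 ≤ 4 * m₁ ^ 2 * (0.481 : ℝ) :=
        mul_le_mul_of_nonneg_left hlogsq (by positivity)
      nlinarith [sq_nonneg m₁]
    clear_value m₁ w L c t
    -- final numeric bound
    have hnum : (24 * t * (1 + 2 * L ^ 2) + 12) / (Real.log 2) ^ 2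
        ≤ ε * (m₁ / 2) ^ 2 := by
      have hden : (12:ℝ) / 25 ≤ (Real.log 2) ^ 2 := by nlinarith
      have hnn : (0:ℝ) ≤ 24 * t * (1 + 2 * L ^ 2) + 12 := by nlinarith [sq_nonneg L]
      have hdiv : (24 * t * (1 + 2 * L ^ 2) + 12) / (Real.log 2) ^ 2
          ≤ (24 * t * (1 + 2 * L ^ 2) + 12) * (25 / 12) := by
        rw [div_le_iff₀ (by positivity)]
        nlinarith [hnn]
      have hexp : (24 * t * (1 + 2 * L ^ 2) + 12) * (25 / 12)
          = 50 * t + 50 * t * (2 * L ^ 2) + 25 := by ring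
      have hterm1 : 50 * t ≤ 2 := by nlinarith
      have hterm2 : 50 * t * (2 * L ^ 2) ≤ 200 * t * m₁ ^ 2 := by
        nlinarith [mul_nonneg ht0 (sq_nonneg L), mul_nonneg ht0 (sq_nonneg m₁)]
      have hterm2' : 200 * t * m₁ ^ 2 ≤ ε * m₁ ^ 2 / 8 := by
        nlinarith [sq_nonneg m₁, mul_le_mul_of_nonneg_right htε (sq_nonneg m₁)]
      have hεm : 864 ≤ ε * m₁ ^ 2 := by nlinarith
      linarith
    calc variance (F a) γ = variance (fun x => F a x - F a μ) γ := hstep1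
      _ ≤ ∫ x, (F a x - F a μ) ^ 2 ∂γ := hstep2
      _ ≤ ∫ x, c * (x - μ) ^ 2 ∂γ := hstep3
      _ ≤ c * (6 * w) := hstep4
      _ = (24 * t * (1 + 2 * L ^ 2) + 12) / (Real.log 2) ^ 2 := hident
      _ ≤ ε * (m₁ / 2) ^ 2 := hnum

end Stmt19

namespace Stmt19

lemma transfer {α : Type*} [MeasurableSpace α] {P : Measure α} [IsProbabilityMeasure P]
    {X : α → ℝ} (hX : Measurable X) {a : ℝ} (ha : 0 < a) {μ : ℝ} {v : ℝ≥0}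
    (hd : P.map X = gaussianReal μ v) :
    MemLp (fun ω => F a (X ω)) 2 P ∧
    ∫ ω, F a (X ω) ∂P = ∫ x, F a x ∂(gaussianReal μ v) ∧
    variance (fun ω => F a (X ω)) P = variance (F a) (gaussianReal μ v) := by
  have hFsm : AEStronglyMeasurable (F a) (P.map X) := by
    rw [hd]; exact (F_cont ha).aestronglyMeasurable
  have hFsq : AEStronglyMeasurable (fun x => (F a x) ^ 2) (P.map X) := by
    rw [hd]; exact ((F_cont ha).pow 2).aestronglyMeasurable
  have hmem : MemLp (fun ω => F a (X ω)) 2 P := by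
    have := (memLp_map_measure_iff hFsm hX.aemeasurable).mp (by rw [hd]; exact memℒp_F ha μ v)
    exact this
  have hint : ∫ ω, F a (X ω) ∂P = ∫ x, F a x ∂(gaussianReal μ v) := by
    rw [← hd, integral_map hX.aemeasurable hFsm]
  have hintsq : ∫ ω, (F a (X ω)) ^ 2 ∂P = ∫ x, (F a x) ^ 2 ∂(gaussianReal μ v) := by
    rw [← hd, integral_map hX.aemeasurable hFsq]
  refine ⟨hmem, hint, ?_⟩
  rw [variance_eq_sub hmem, variance_eq_sub (memℒp_F ha μ v)]
  simp only [Pi.pow_apply]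
  rw [hint, hintsq]

end Stmt19

open Stmt19 in
set_option maxHeartbeats 1000000 in
theorem stmt19
    (K : ℕ) (hK : 1 ≤ K)
    (ρ : ℝ) (hρ : 0 < ρ)
    (β : Fin K → ℝ) (hβ : ∀ k, 0 < β k)
    (μ : Fin K → ℕ → ℝ) (v : Fin K → ℕ → NNReal)
    (hμ : ∀ k, Tendsto (fun N : ℕ => μ k N) atTop atTop)
    (hv : ∀ k, Tendsto (fun N : ℕ => (v k N : ℝ) / μ k N ^ 2) atTop (nhds 0))
    (Ω : ℕ → Type) [∀ N, MeasurableSpace (Ω N)]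
    (P : ∀ N, Measure (Ω N)) [∀ N, IsProbabilityMeasure (P N)]
    (X : ∀ N : ℕ, Fin K → Ω N → ℝ)
    (hmeas : ∀ N : ℕ, ∀ k, Measurable (X N k))
    (hindep : ∀ N : ℕ, iIndepFun (X N) (P N))
    (hdist : ∀ N : ℕ, ∀ k : Fin K,
      (P N).map (X N k) = gaussianReal (μ k N) (v k N)) :
    Tendsto
      (fun N : ℕ =>
        variance
            (fun ω => ∑ k : Fin K, Real.logb 2 (1 + ρ * β k * |X N k ω|)) (P N) /
          (∫ ω, ∑ k : Fin K, Real.logb 2 (1 + ρ * β k * |X N k ω|) ∂(P N)) ^ 2)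
      atTop (nhds 0) := by
  have ha : ∀ k : Fin K, 0 < ρ * β k := fun k => mul_pos hρ (hβ k)
  rw [NormedAddCommGroup.tendsto_nhds_zero]
  intro ε hε
  have hε2 : 0 < ε / 2 := by linarith
  -- eventual conditions for each k
  have hev : ∀ k : Fin K, ∀ᶠ N in atTop,
      (0 < μ k N ∧ 6 / (ρ * β k) ≤ μ k N) ∧
      ((v k N : ℝ) / μ k N ^ 2 ≤ 1 / 48 ∧ (v k N : ℝ) / μ k N ^ 2 ≤ ε / 2 / 2304) ∧
      216 ≤ ε / 2 * (Real.logb 2 (1 + ρ * β k * (μ k N / 2)) / 2) ^ 2 := by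
    intro k
    have e0 : ∀ᶠ N in atTop, 0 < μ k N := (hμ k).eventually_gt_atTop 0
    have e1 : ∀ᶠ N in atTop, 6 / (ρ * β k) ≤ μ k N := (hμ k).eventually_ge_atTop _
    have e2 : ∀ᶠ N in atTop, (v k N : ℝ) / μ k N ^ 2 ≤ 1 / 48 :=
      (hv k).eventually (eventually_le_nhds (by norm_num))
    have e3 : ∀ᶠ N in atTop, (v k N : ℝ) / μ k N ^ 2 ≤ ε / 2 / 2304 :=
      (hv k).eventually (eventually_le_nhds (by positivity))
    have e4 : ∀ᶠ N in atTop,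
        216 ≤ ε / 2 * (Real.logb 2 (1 + ρ * β k * (μ k N / 2)) / 2) ^ 2 := by
      have harg : Tendsto (fun N => 1 + ρ * β k * (μ k N / 2)) atTop atTop := by
        apply tendsto_atTop_add_const_left
        have := (hμ k).atTop_div_const (by norm_num : (0:ℝ) < 2)
        exact this.const_mul_atTop (ha k)
      have hlogb : Tendsto (fun N => Real.logb 2 (1 + ρ * β k * (μ k N / 2))) atTop atTop :=
        (Real.tendsto_logb_atTop one_lt_two).comp harg
      have hsq : Tendsto (fun N => ε / 2 * (Real.logb 2 (1 + ρ * β k * (μ k N / 2)) / 2) ^ 2)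
          atTop atTop := by
        have h1 := (hlogb.atTop_div_const (by norm_num : (0:ℝ) < 2))
        have h2 := (tendsto_pow_atTop (n := 2) (by norm_num)).comp h1
        exact h2.const_mul_atTop hε2
      exact hsq.eventually_ge_atTop 216
    filter_upwards [e0, e1, e2, e3, e4] with N h0 h1 h2 h3 h4
    exact ⟨⟨h0, h1⟩, ⟨h2, h3⟩, h4⟩
  rw [← Filter.eventually_all] at hev
  filter_upwards [hev] with N hN
  -- per-k conclusions of the key lemma
  have hkey : ∀ k : Fin K,
      1 ≤ ∫ x, F (ρ * β k) x ∂(gaussianReal (μ k N) (v k N)) ∧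
      variance (F (ρ * β k)) (gaussianReal (μ k N) (v k N))
        ≤ ε / 2 * (∫ x, F (ρ * β k) x ∂(gaussianReal (μ k N) (v k N))) ^ 2 := by
    intro k
    obtain ⟨⟨h0, h1⟩, ⟨h2, h3⟩, h4⟩ := hN k
    have hμsq : (0:ℝ) < μ k N ^ 2 := by positivity
    have h2' : (v k N : ℝ) ≤ μ k N ^ 2 / 48 := by
      rw [div_le_div_iff₀ hμsq (by norm_num)] at h2
      linarith
    exact key (ha k) hε2 (μ k N) (v k N) h1 h2' h3 h4
  -- transfer to Ω
  have htrans : ∀ k : Fin K,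
      MemLp (fun ω => F (ρ * β k) (X N k ω)) 2 (P N) ∧
      ∫ ω, F (ρ * β k) (X N k ω) ∂(P N)
        = ∫ x, F (ρ * β k) x ∂(gaussianReal (μ k N) (v k N)) ∧
      variance (fun ω => F (ρ * β k) (X N k ω)) (P N)
        = variance (F (ρ * β k)) (gaussianReal (μ k N) (v k N)) :=
    fun k => transfer (hmeas N k) (ha k) (hdist N k)
  set m : Fin K → ℝ := fun k => ∫ ω, F (ρ * β k) (X N k ω) ∂(P N) with hm
  have hm1 : ∀ k, 1 ≤ m k := by
    intro k
    have h := (hkey k).1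
    rw [← (htrans k).2.1] at h
    exact h
  have hm0 : ∀ k, 0 ≤ m k := fun k => le_trans zero_le_one (hm1 k)
  have hvk : ∀ k, variance (fun ω => F (ρ * β k) (X N k ω)) (P N) ≤ ε / 2 * (m k) ^ 2 := by
    intro k
    rw [(htrans k).2.2, hm]
    simp only []
    rw [(htrans k).2.1]
    exact (hkey k).2
  -- sum facts
  have hsum_fun : (fun ω => ∑ k : Fin K, Real.logb 2 (1 + ρ * β k * |X N k ω|))
      = ∑ k : Fin K, (fun ω => F (ρ * β k) (X N k ω)) := by
    funext ω
    rw [Finset.sum_apply]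
    rfl
  have hvar_sum : variance (fun ω => ∑ k : Fin K, Real.logb 2 (1 + ρ * β k * |X N k ω|)) (P N)
      = ∑ k : Fin K, variance (fun ω => F (ρ * β k) (X N k ω)) (P N) := by
    rw [hsum_fun]
    refine IndepFun.variance_sum (fun k _ => (htrans k).1) ?_
    intro i _ j _ hij
    exact ((hindep N).comp (fun k => F (ρ * β k)) (fun k => (F_cont (ha k)).measurable)).indepFun hij
  have hmean_sum : ∫ ω, ∑ k : Fin K, Real.logb 2 (1 + ρ * β k * |X N k ω|) ∂(P N)
      = ∑ k : Fin K, m k := by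
    rw [hm]
    exact integral_finset_sum _ (fun k _ => ((htrans k).1).integrable one_le_two)
  set M : ℝ := ∑ k : Fin K, m k with hM
  have hM1 : 1 ≤ M := by
    have hk0 : (⟨0, hK⟩ : Fin K) ∈ Finset.univ := Finset.mem_univ _
    calc (1:ℝ) ≤ m ⟨0, hK⟩ := hm1 _
      _ ≤ M := Finset.single_le_sum (fun k _ => hm0 k) hk0
  have hMsq : 0 < M ^ 2 := by positivity
  have hvar_le : variance (fun ω => ∑ k : Fin K, Real.logb 2 (1 + ρ * β k * |X N k ω|)) (P N)
      ≤ ε / 2 * M ^ 2 := by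
    rw [hvar_sum]
    calc ∑ k : Fin K, variance (fun ω => F (ρ * β k) (X N k ω)) (P N)
        ≤ ∑ k : Fin K, ε / 2 * (m k) ^ 2 := Finset.sum_le_sum (fun k _ => hvk k)
      _ = ε / 2 * ∑ k : Fin K, (m k) ^ 2 := by rw [Finset.mul_sum]
      _ ≤ ε / 2 * M ^ 2 := by
          refine mul_le_mul_of_nonneg_left ?_ hε2.le
          exact Finset.sum_sq_le_sq_sum_of_nonneg (fun k _ => hm0 k)
  have hration : 0 ≤ variance (fun ω => ∑ k : Fin K, Real.logb 2 (1 + ρ * β k * |X N k ω|)) (P N)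
      / (∫ ω, ∑ k : Fin K, Real.logb 2 (1 + ρ * β k * |X N k ω|) ∂(P N)) ^ 2 :=
    div_nonneg (variance_nonneg _ _) (sq_nonneg _)
  rw [Real.norm_eq_abs, abs_of_nonneg hration, hmean_sum]
  rw [div_lt_iff₀ hMsq]
  calc variance (fun ω => ∑ k : Fin K, Real.logb 2 (1 + ρ * β k * |X N k ω|)) (P N)
      ≤ ε / 2 * M ^ 2 := hvar_le
    _ < ε * M ^ 2 := by nlinarith
end
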